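/- arXiv:1803.07194 — 5 statements merged into one kernel-verified Lean document; each statement's English description precedes it below -/
import Mathlib

section
/- Nonnegativity of the restricted operator T_{0,k} (appendix claim, α < 0): Let N ≥ 3 be an integer, α < 0 and k ∈ {1,…,⌊(N−1)/2⌋}; set a_k = α/(2k−N) > 0. Let V = (v_1,…,v_N) ∈ W²(G) be real-valued with v₁(0) = … = v_N(0) = 0, ∑_{j=1}^N v_j'(0) = 0, and v_j(a_k) = 0 for j = 1,…,k. Then ∑_{j=1}^{k} ∫₀^∞ ( (v_j')² + ((x−a_k)²−3) v_j² ) dx + ∑_{j=k+1}^{N} ∫₀^∞ ( (v_j')² + ((x+a_k)²−3) v_j² ) dx ≥ 0. -/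
open MeasureTheory Set Filter

noncomputable section

def mu : Measure ℝ := volume.restrict (Set.Ioi (0:ℝ))

def MemL2 (f : ℝ → ℂ) : Prop := MeasureTheory.MemLp f 2 mu

def MemH1 (f : ℝ → ℂ) : Prop :=
  ContinuousOn f (Set.Ici (0:ℝ)) ∧ (∀ x ∈ Set.Ioi (0:ℝ), DifferentiableAt ℝ f x) ∧
    MemL2 f ∧ MemL2 (deriv f)

def MemH2 (f : ℝ → ℂ) : Prop :=
  MemH1 f ∧ ContinuousOn (deriv f) (Set.Ici (0:ℝ)) ∧
    (∀ x ∈ Set.Ioi (0:ℝ), DifferentiableAt ℝ (deriv f) x) ∧ MemL2 (deriv (deriv f))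

def MemW1 (f : ℝ → ℂ) : Prop := MemH1 f ∧ MemL2 (fun x => (x : ℂ) * f x)

def MemW2 (f : ℝ → ℂ) : Prop := MemH2 f ∧ MemL2 (fun x => ((x : ℂ))^2 * f x)

def domDelta (N : ℕ) (α : ℝ) (V : Fin N → ℝ → ℂ) : Prop :=
  (∀ j, MemW2 (V j)) ∧ (∀ j j', V j 0 = V j' 0) ∧
    (∀ j₀, (∑ j, deriv (V j) 0) = (α : ℂ) * V j₀ 0)

def pot (N k : ℕ) (α c : ℝ) (j : Fin N) (x : ℝ) : ℝ :=
  if (j : ℕ) < k then (x - α/(2*(k:ℝ) - (N:ℝ)))^2 - c else (x + α/(2*(k:ℝ) - (N:ℝ)))^2 - c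

def Tlin (N k : ℕ) (α c : ℝ) (V : Fin N → ℝ → ℂ) (j : Fin N) (x : ℝ) : ℂ :=
  -(deriv (deriv (V j)) x) + (pot N k α c j x : ℂ) * V j x

def qf (N k : ℕ) (α c : ℝ) (V : Fin N → ℝ → ℂ) : ℝ :=
  (∑ j, ∫ x in Set.Ioi (0:ℝ), Tlin N k α c V j x * (starRingEnd ℂ) (V j x)).re

def memL2k (N k : ℕ) (V : Fin N → ℝ → ℂ) : Prop :=
  ∀ j j' : Fin N, (((j:ℕ) < k ∧ (j':ℕ) < k) ∨ (k ≤ (j:ℕ) ∧ k ≤ (j':ℕ))) → V j =ᵐ[mu] V j'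

def phiProf (N k : ℕ) (α ω : ℝ) (j : Fin N) (x : ℝ) : ℝ :=
  if (j : ℕ) < k then Real.exp ((ω+1)/2) * Real.exp (-(x - α/(2*(k:ℝ) - (N:ℝ)))^2/2)
  else Real.exp ((ω+1)/2) * Real.exp (-(x + α/(2*(k:ℝ) - (N:ℝ)))^2/2)



def MemL2r (f : ℝ → ℝ) : Prop := MeasureTheory.MemLp f 2 mu

def MemH1r (f : ℝ → ℝ) : Prop :=
  ContinuousOn f (Set.Ici (0:ℝ)) ∧ (∀ x ∈ Set.Ioi (0:ℝ), DifferentiableAt ℝ f x) ∧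
    MemL2r f ∧ MemL2r (deriv f)

def MemH2r (f : ℝ → ℝ) : Prop :=
  MemH1r f ∧ ContinuousOn (deriv f) (Set.Ici (0:ℝ)) ∧
    (∀ x ∈ Set.Ioi (0:ℝ), DifferentiableAt ℝ (deriv f) x) ∧ MemL2r (deriv (deriv f))

def MemW2r (f : ℝ → ℝ) : Prop := MemH2r f ∧ MemL2r (fun x => x^2 * f x)

def domDeltaR (N : ℕ) (α : ℝ) (P : Fin N → ℝ → ℝ) : Prop :=
  (∀ j, MemW2r (P j)) ∧ (∀ j j', P j 0 = P j' 0) ∧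
    (∀ j₀, (∑ j, deriv (P j) 0) = α * P j₀ 0)

def TlinR (N k : ℕ) (α c : ℝ) (P : Fin N → ℝ → ℝ) (j : Fin N) (x : ℝ) : ℝ :=
  -(deriv (deriv (P j)) x) + pot N k α c j x * P j x


open intervalIntegral Topology

/-- Linear bound near 0 from a continuous derivative. -/
lemma lin_bound (b : ℝ) (hb : 0 < b) (v w : ℝ → ℝ) (hv0 : v 0 = 0)
    (hvc : ContinuousOn v (Icc 0 b)) (hwc : ContinuousOn w (Icc 0 b))
    (hd : ∀ x ∈ Ioo (0:ℝ) b, HasDerivAt v (w x) x) :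
    ∃ C : ℝ, 0 ≤ C ∧ ∀ ε ∈ Icc (0:ℝ) b, |v ε| ≤ C * ε := by
  obtain ⟨C, hC⟩ := (isCompact_Icc (a := (0:ℝ)) (b := b)).exists_bound_of_continuousOn hwc
  refine ⟨max C 0, le_max_right _ _, fun ε hε => ?_⟩
  have hεb : ε ≤ b := hε.2
  have hε0 : 0 ≤ ε := hε.1
  have hIcc : Icc (0:ℝ) ε ⊆ Icc 0 b := Icc_subset_Icc le_rfl hεb
  have hftc : ∫ x in (0:ℝ)..ε, w x = v ε - v 0 := by
    apply integral_eq_sub_of_hasDeriv_right_of_le hε0 (hvc.mono hIcc)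
    · intro x hx
      exact ((hd x ⟨hx.1, lt_of_lt_of_le hx.2 hεb⟩).hasDerivWithinAt)
    · exact (hwc.mono hIcc).intervalIntegrable_of_Icc hε0
  have hnorm : ‖∫ x in (0:ℝ)..ε, w x‖ ≤ (max C 0) * |ε - 0| := by
    apply intervalIntegral.norm_integral_le_of_norm_le_const
    intro x hx
    rw [Set.uIoc_of_le hε0] at hx
    exact le_trans (hC x ⟨le_of_lt hx.1, le_trans hx.2 hεb⟩) (le_max_left _ _)
  rw [hftc, hv0, sub_zero] at hnorm
  simpa [abs_of_nonneg hε0] using hnorm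

/-- FTC step: on `[ε,R]` the target integral dominates the boundary terms. -/
lemma ftc_core (v w : ℝ → ℝ) (ε R : ℝ) (hε : 0 < ε) (hεR : ε ≤ R)
    (hvc : ContinuousOn v (Icc ε R)) (hwc : ContinuousOn w (Icc ε R))
    (hd : ∀ x ∈ Ioo ε R, HasDerivAt v (w x) x) :
    (1/R - R) * (v R)^2 - (1/ε - ε) * (v ε)^2
      ≤ ∫ x in ε..R, ((w x)^2 + (x^2 - 3) * (v x)^2) := by
  set F : ℝ → ℝ := fun x => (1/x - x) * (v x)^2 with hF
  set G : ℝ → ℝ := fun x => (w x - v x / x + x * v x)^2 with hG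
  set T : ℝ → ℝ := fun x => (w x)^2 + (x^2 - 3) * (v x)^2 with hT
  have hpos : ∀ x ∈ Icc ε R, (0:ℝ) < x := fun x hx => lt_of_lt_of_le hε hx.1
  have hcT : ContinuousOn T (Icc ε R) := by
    apply ContinuousOn.add (hwc.pow 2)
    exact ContinuousOn.mul (by fun_prop) ((hvc.pow 2))
  have hcG : ContinuousOn G (Icc ε R) := by
    apply ContinuousOn.pow
    apply ContinuousOn.add
    · exact hwc.sub (hvc.div continuousOn_id (fun x hx => (hpos x hx).ne'))
    · exact continuousOn_id.mul hvc
  have hcF : ContinuousOn F (Icc ε R) := by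
    apply ContinuousOn.mul
    · exact (continuousOn_const.div continuousOn_id (fun x hx => (hpos x hx).ne')).sub
        continuousOn_id
    · exact hvc.pow 2
  have hdF : ∀ x ∈ Ioo ε R, HasDerivAt F (T x - G x) x := by
    intro x hx
    have hx0 : (0:ℝ) < x := lt_trans hε hx.1
    have h1 : HasDerivAt (fun y : ℝ => 1/y - y) (-(1/x^2) - 1) x := by
      simpa [one_div] using ((hasDerivAt_inv hx0.ne').fun_sub (hasDerivAt_id' x))
    have h2 : HasDerivAt (fun y => (v y)^2) (2 * v x * w x) x := by
      simpa [mul_comm] using ((hd x hx).fun_pow 2)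
    have := h1.fun_mul h2
    refine this.congr_deriv ?_
    simp only [hT, hG]
    field_simp
    ring
  have hIT : IntervalIntegrable T volume ε R := (hcT.intervalIntegrable_of_Icc hεR)
  have hIG : IntervalIntegrable G volume ε R := (hcG.intervalIntegrable_of_Icc hεR)
  have hftc : ∫ x in ε..R, (T x - G x) = F R - F ε := by
    apply integral_eq_sub_of_hasDeriv_right_of_le hεR hcF
    · exact fun x hx => (hdF x hx).hasDerivWithinAt
    · exact hIT.sub hIG
  rw [intervalIntegral.integral_sub hIT hIG] at hftc
  have hGnn : 0 ≤ ∫ x in ε..R, G x :=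
    intervalIntegral.integral_nonneg hεR (fun x _ => sq_nonneg _)
  have : F R - F ε ≤ ∫ x in ε..R, T x := by linarith
  simpa [hF] using this

lemma decay_infty (v w : ℝ → ℝ)
    (hvc : ContinuousOn v (Ici 0)) (hwc : ContinuousOn w (Ici 0))
    (hd : ∀ x ∈ Ioi (0:ℝ), HasDerivAt v (w x) x)
    (hw2 : IntegrableOn (fun x => (w x)^2) (Ioi 0))
    (hv2 : IntegrableOn (fun x => (v x)^2) (Ioi 0))
    (hx4 : IntegrableOn (fun x => x^4 * (v x)^2) (Ioi 0)) :
    Tendsto (fun x => x * (v x)^2) atTop (𝓝 0) := by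
  set H : ℝ → ℝ := fun x => x * (v x)^2 with hH
  set h : ℝ → ℝ := fun x => (v x)^2 + 2 * x * v x * w x with hh
  have hvm : AEStronglyMeasurable v (volume.restrict (Ioi (0:ℝ))) :=
    (hvc.mono Ioi_subset_Ici_self).aestronglyMeasurable measurableSet_Ioi
  have hwm : AEStronglyMeasurable w (volume.restrict (Ioi (0:ℝ))) :=
    (hwc.mono Ioi_subset_Ici_self).aestronglyMeasurable measurableSet_Ioi
  have hx2v2 : IntegrableOn (fun x => x^2 * (v x)^2) (Ioi 0) := by
    apply Integrable.mono' (hx4.add hv2)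
    · exact (aestronglyMeasurable_id.pow 2).mul (hvm.pow 2)
    · filter_upwards with x
      simp only [Pi.add_apply]
      have h1 : x^2 ≤ x^4 + 1 := by nlinarith [sq_nonneg (x^2 - 1)]
      have : |x^2 * (v x)^2| = x^2 * (v x)^2 := abs_of_nonneg (by positivity)
      rw [Real.norm_eq_abs, this]
      nlinarith [sq_nonneg (v x)]
  have hhint : IntegrableOn h (Ioi 1) := by
    apply IntegrableOn.mono_set ?_ (Ioi_subset_Ioi zero_le_one)
    apply Integrable.add hv2
    apply Integrable.mono' (hx2v2.add hw2)
    · exact ((aestronglyMeasurable_const.mul aestronglyMeasurable_id).mul hvm).mul hwm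
    · filter_upwards with x
      simp only [Pi.add_apply]
      rw [Real.norm_eq_abs, abs_le]
      constructor <;> nlinarith [sq_nonneg (x * v x - w x), sq_nonneg (x * v x + w x)]
  have hftcH : ∀ R : ℝ, 1 ≤ R → ∫ x in (1:ℝ)..R, h x = H R - H 1 := by
    intro R hR
    apply integral_eq_sub_of_hasDeriv_right_of_le hR
    · apply ContinuousOn.mul continuousOn_id
      exact ((hvc.mono (fun x hx => le_trans zero_le_one hx.1)).pow 2)
    · intro x hx
      have hx0 : (0:ℝ) < x := lt_trans zero_lt_one hx.1
      have := (hasDerivAt_id x).fun_mul ((hd x hx0).fun_pow 2)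
      apply HasDerivAt.hasDerivWithinAt
      refine this.congr_deriv ?_
      simp [hh]; ring
    · apply ContinuousOn.intervalIntegrable_of_Icc hR
      have hsub : Icc (1:ℝ) R ⊆ Ici 0 := fun x hx => le_trans zero_le_one hx.1
      have h1 : ContinuousOn v (Icc 1 R) := hvc.mono hsub
      have h2 : ContinuousOn w (Icc 1 R) := hwc.mono hsub
      fun_prop
  have htendI : Tendsto (fun R : ℝ => ∫ x in (1:ℝ)..R, h x) atTop
      (𝓝 (∫ x in Ioi (1:ℝ), h x)) :=
    intervalIntegral_tendsto_integral_Ioi 1 hhint tendsto_id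
  have htendH : Tendsto H atTop (𝓝 (H 1 + ∫ x in Ioi (1:ℝ), h x)) := by
    have : Tendsto (fun R : ℝ => H 1 + ∫ x in (1:ℝ)..R, h x) atTop
        (𝓝 (H 1 + ∫ x in Ioi (1:ℝ), h x)) := tendsto_const_nhds.add htendI
    apply this.congr'
    filter_upwards [eventually_ge_atTop (1:ℝ)] with R hR
    rw [hftcH R hR]; ring
  set L : ℝ := H 1 + ∫ x in Ioi (1:ℝ), h x with hL
  have hL0 : L = 0 := by
    have hLnn : 0 ≤ L := by
      apply ge_of_tendsto htendH
      filter_upwards [eventually_ge_atTop (0:ℝ)] with x hx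
      exact mul_nonneg hx (sq_nonneg _)
    rcases eq_or_lt_of_le hLnn with h' | h'
    · exact h'.symm
    · exfalso
      have hev : ∀ᶠ x in atTop, L/2 < H x := htendH.eventually_const_lt (by linarith)
      obtain ⟨M, hM⟩ := (hev.and (eventually_ge_atTop (1:ℝ))).exists_forall_of_atTop
      rw [eventually_atTop] at hev
      obtain ⟨M, hM⟩ := hev
      set M' := max M 1 with hM'def
      have hMint : IntegrableOn (fun x => x^2 * (v x)^2) (Ioi M') :=
        hx2v2.mono_set (Ioi_subset_Ioi (le_trans zero_le_one (le_max_right _ _)))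
      have hconst : IntegrableOn (fun _ : ℝ => L/2) (Ioi M') := by
        apply Integrable.mono' hMint aestronglyMeasurable_const
        rw [ae_restrict_iff' measurableSet_Ioi]
        filter_upwards with x hx
        have hx1 : (1:ℝ) ≤ x := le_of_lt (lt_of_le_of_lt (le_max_right M 1) hx)
        have hHx : L/2 < H x := hM x (le_of_lt (lt_of_le_of_lt (le_max_left M 1) hx))
        have hHnn : 0 ≤ H x := mul_nonneg (le_trans zero_le_one hx1) (sq_nonneg (v x))
        have heq : x^2 * (v x)^2 = x * H x := by rw [hH]; ring
        rw [Real.norm_eq_abs, abs_of_pos (by linarith), heq]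
        nlinarith
      rw [IntegrableOn, integrable_const_iff] at hconst
      rcases hconst with h2 | h2
      · linarith
      · rw [isFiniteMeasure_restrict, Real.volume_Ioi] at h2
        exact h2 rfl
  rw [hL0] at htendH
  exact htendH

lemma F_decay (v w : ℝ → ℝ)
    (hvc : ContinuousOn v (Ici 0)) (hwc : ContinuousOn w (Ici 0))
    (hd : ∀ x ∈ Ioi (0:ℝ), HasDerivAt v (w x) x)
    (hw2 : IntegrableOn (fun x => (w x)^2) (Ioi 0))
    (hv2 : IntegrableOn (fun x => (v x)^2) (Ioi 0))
    (hx4 : IntegrableOn (fun x => x^4 * (v x)^2) (Ioi 0)) :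
    Tendsto (fun x => (1/x - x) * (v x)^2) atTop (𝓝 0) := by
  have hdec := decay_infty v w hvc hwc hd hw2 hv2 hx4
  have hinv : Tendsto (fun x : ℝ => 1/x^2 - 1) atTop (𝓝 (0 - 1)) := by
    apply Tendsto.sub ?_ tendsto_const_nhds
    have h2 : Tendsto (fun x : ℝ => x^2) atTop atTop := tendsto_pow_atTop (by norm_num)
    simpa only [one_div, Pi.inv_def] using h2.inv_tendsto_atTop
  have h1 : Tendsto (fun x : ℝ => (1/x^2 - 1) * (x * (v x)^2)) atTop (𝓝 ((0-1) * 0)) :=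
    hinv.mul hdec
  rw [show ((0:ℝ)-1) * 0 = 0 by ring] at h1
  apply h1.congr'
  filter_upwards [eventually_ge_atTop (1:ℝ)] with x hx
  have hx0 : x ≠ 0 := by linarith
  field_simp

/-- Ground-state energy lower bound on the half line: for `v(0) = 0`,
`∫ (v')² + (x²-3) v² ≥ 0`. -/
lemma keyA (v w : ℝ → ℝ) (hv0 : v 0 = 0)
    (hvc : ContinuousOn v (Ici 0)) (hwc : ContinuousOn w (Ici 0))
    (hd : ∀ x ∈ Ioi (0:ℝ), HasDerivAt v (w x) x)
    (hw2 : IntegrableOn (fun x => (w x)^2) (Ioi 0))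
    (hv2 : IntegrableOn (fun x => (v x)^2) (Ioi 0))
    (hx4 : IntegrableOn (fun x => x^4 * (v x)^2) (Ioi 0)) :
    0 ≤ ∫ x in Ioi (0:ℝ), ((w x)^2 + (x^2 - 3) * (v x)^2) := by
  set T : ℝ → ℝ := fun x => (w x)^2 + (x^2 - 3) * (v x)^2 with hT
  -- integrability of the target
  have hvm : AEStronglyMeasurable v (volume.restrict (Ioi (0:ℝ))) :=
    (hvc.mono Ioi_subset_Ici_self).aestronglyMeasurable measurableSet_Ioi
  have hwm : AEStronglyMeasurable w (volume.restrict (Ioi (0:ℝ))) :=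
    (hwc.mono Ioi_subset_Ici_self).aestronglyMeasurable measurableSet_Ioi
  have hTint : IntegrableOn T (Ioi 0) := by
    apply Integrable.mono' ((hw2.add hx4).add (hv2.const_mul 4))
    · exact (hwm.pow 2).add
        ((aestronglyMeasurable_id.pow 2).sub aestronglyMeasurable_const |>.mul (hvm.pow 2))
    · filter_upwards with x
      simp only [Pi.add_apply, hT]
      rw [Real.norm_eq_abs, abs_le]
      have hub : (x^2 - 3) * (v x)^2 ≤ (x^4 + 4) * (v x)^2 :=
        mul_le_mul_of_nonneg_right (by nlinarith [sq_nonneg (x^2 - 1)]) (sq_nonneg (v x))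
      have hlb : (-3 : ℝ) * (v x)^2 ≤ (x^2 - 3) * (v x)^2 :=
        mul_le_mul_of_nonneg_right (by nlinarith [sq_nonneg x]) (sq_nonneg (v x))
      constructor <;> nlinarith [sq_nonneg (v x), sq_nonneg (w x),
        (by positivity : (0:ℝ) ≤ x^4 * (v x)^2)]
  -- boundary term at 0
  obtain ⟨C, hC0, hC⟩ := lin_bound 1 zero_lt_one v w hv0 (hvc.mono (Icc_subset_Ici_self))
    (hwc.mono (Icc_subset_Ici_self)) (fun x hx => hd x hx.1)
  have hFsmall : Tendsto (fun n : ℕ => (1/((n:ℝ)+1)⁻¹ - ((n:ℝ)+1)⁻¹) * (v (((n:ℝ)+1)⁻¹))^2)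
      atTop (𝓝 0) := by
    apply squeeze_zero_norm ?_ ?_
    · exact fun n => C^2 * ((n:ℝ)+1)⁻¹
    · intro n
      set ε : ℝ := ((n:ℝ)+1)⁻¹ with hε
      have hεpos : 0 < ε := by positivity
      have hε1 : ε ≤ 1 := by
        rw [hε]
        rw [inv_le_one_iff₀]
        right; push_cast; linarith [Nat.cast_nonneg (α := ℝ) n]
      have hvb : |v ε| ≤ C * ε := hC ε ⟨le_of_lt hεpos, hε1⟩
      have hv2b : (v ε)^2 ≤ (C*ε)^2 := by
        rw [← sq_abs]
        exact pow_le_pow_left₀ (abs_nonneg _) hvb 2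
      have h1ε : 1 ≤ 1/ε := one_le_one_div hεpos hε1
      have h1 : |1/ε - ε| ≤ 1/ε := by
        rw [abs_of_nonneg (by linarith)]
        linarith
      calc ‖(1/ε - ε) * (v ε)^2‖ = |1/ε - ε| * (v ε)^2 := by
            rw [norm_mul, Real.norm_eq_abs, Real.norm_eq_abs, abs_of_nonneg (sq_nonneg (v ε))]
        _ ≤ (1/ε) * (C*ε)^2 := by
            apply mul_le_mul h1 hv2b (sq_nonneg _) (by positivity)
        _ = C^2 * ε := by field_simp
    · have : Tendsto (fun n : ℕ => ((n:ℝ)+1)⁻¹) atTop (𝓝 0) := by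
        simpa only [one_div] using tendsto_one_div_add_atTop_nhds_zero_nat (𝕜 := ℝ)
      simpa using this.const_mul (C^2)
  -- boundary term at infinity
  have hFbig' := F_decay v w hvc hwc hd hw2 hv2 hx4
  have hRn : Tendsto (fun n : ℕ => (n:ℝ)+1) atTop atTop :=
    tendsto_atTop_add_const_right atTop 1 tendsto_natCast_atTop_atTop
  have hFbig : Tendsto (fun n : ℕ => (1/((n:ℝ)+1) - ((n:ℝ)+1)) * (v ((n:ℝ)+1))^2)
      atTop (𝓝 0) := hFbig'.comp hRn
  -- monotone family of sets
  set s : ℕ → Set ℝ := fun n => Ioo ((n:ℝ)+1)⁻¹ ((n:ℝ)+1) with hs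
  have hsm : ∀ n, MeasurableSet (s n) := fun n => measurableSet_Ioo
  have hmono : Monotone s := by
    intro m n hmn
    apply Ioo_subset_Ioo
    · apply inv_anti₀ (by positivity)
      push_cast; exact_mod_cast (by exact_mod_cast add_le_add_left (Nat.cast_le.mpr hmn) 1)
    · exact add_le_add_left (Nat.cast_le.mpr hmn) 1
  have hunion : ⋃ n, s n = Ioi (0:ℝ) := by
    ext x
    simp only [mem_iUnion, hs, mem_Ioo, mem_Ioi]
    constructor
    · rintro ⟨n, h1, h2⟩
      exact lt_trans (by positivity) h1
    · intro hx
      obtain ⟨n, hn⟩ := exists_nat_gt (max x x⁻¹)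
      have h1 : x⁻¹ < (n:ℝ)+1 := lt_trans (lt_of_le_of_lt (le_max_right _ _) hn) (by linarith)
      exact ⟨n, (inv_lt_comm₀ hx (by positivity)).mp h1,
        lt_trans (lt_of_le_of_lt (le_max_left _ _) hn) (by linarith)⟩
  have htend : Tendsto (fun n => ∫ x in s n, T x) atTop (𝓝 (∫ x in Ioi (0:ℝ), T x)) := by
    have := tendsto_setIntegral_of_monotone hsm hmono (hunion ▸ hTint)
    rwa [hunion] at this
  -- per-n lower bound
  have hbound : ∀ n : ℕ, (1/((n:ℝ)+1) - ((n:ℝ)+1)) * (v ((n:ℝ)+1))^2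
      - (1/((n:ℝ)+1)⁻¹ - ((n:ℝ)+1)⁻¹) * (v (((n:ℝ)+1)⁻¹))^2 ≤ ∫ x in s n, T x := by
    intro n
    set ε : ℝ := ((n:ℝ)+1)⁻¹ with hε
    set R : ℝ := ((n:ℝ)+1) with hR
    have hεpos : 0 < ε := by positivity
    have hRpos : (1:ℝ) ≤ R := by rw [hR]; linarith [Nat.cast_nonneg (α := ℝ) n]
    have hεR : ε ≤ R := by
      have : ε ≤ 1 := by
        rw [hε, inv_le_one_iff₀]; right; linarith [Nat.cast_nonneg (α := ℝ) n]
      linarith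
    have hsub : Icc ε R ⊆ Ici 0 := fun x hx => le_trans (le_of_lt hεpos) hx.1
    have := ftc_core v w ε R hεpos hεR (hvc.mono hsub) (hwc.mono hsub)
      (fun x hx => hd x (lt_trans hεpos hx.1))
    have heq : ∫ x in ε..R, ((w x)^2 + (x^2-3)*(v x)^2) = ∫ x in s n, T x := by
      rw [intervalIntegral.integral_of_le hεR, ← integral_Ioc_eq_integral_Ioo]
    linarith [this, le_of_eq heq]
  have hlim : Tendsto (fun n : ℕ => (1/((n:ℝ)+1) - ((n:ℝ)+1)) * (v ((n:ℝ)+1))^2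
      - (1/((n:ℝ)+1)⁻¹ - ((n:ℝ)+1)⁻¹) * (v (((n:ℝ)+1)⁻¹))^2) atTop (𝓝 0) := by
    simpa using hFbig.sub hFsmall
  exact le_of_tendsto_of_tendsto' hlim htend hbound

/-- Interval version with Dirichlet conditions at both ends. -/
lemma keyB (b : ℝ) (hb : 0 < b) (v w : ℝ → ℝ) (hv0 : v 0 = 0) (hvb : v b = 0)
    (hvc : ContinuousOn v (Icc 0 b)) (hwc : ContinuousOn w (Icc 0 b))
    (hd : ∀ x ∈ Ioo (0:ℝ) b, HasDerivAt v (w x) x) :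
    0 ≤ ∫ x in (0:ℝ)..b, ((w x)^2 + (x^2 - 3) * (v x)^2) := by
  set T : ℝ → ℝ := fun x => (w x)^2 + (x^2 - 3) * (v x)^2 with hT
  have hcT : ContinuousOn T (Icc 0 b) := by
    apply ContinuousOn.add (hwc.pow 2)
    exact ContinuousOn.mul (by fun_prop) (hvc.pow 2)
  obtain ⟨D, hD⟩ := (isCompact_Icc (a := (0:ℝ)) (b := b)).exists_bound_of_continuousOn hcT
  obtain ⟨C, hC0, hC⟩ := lin_bound b hb v w hv0 hvc hwc hd
  -- the sequence of cut points
  set e : ℕ → ℝ := fun n => b * ((n:ℝ)+1)⁻¹ with he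
  have hepos : ∀ n, 0 < e n := fun n => by positivity
  have heb : ∀ n, e n ≤ b := by
    intro n
    rw [he]
    calc b * ((n:ℝ)+1)⁻¹ ≤ b * 1 := by
          apply mul_le_mul_of_nonneg_left ?_ (le_of_lt hb)
          rw [inv_le_one_iff₀]; right; linarith [Nat.cast_nonneg (α := ℝ) n]
      _ = b := mul_one b
  have he0 : Tendsto e atTop (𝓝 0) := by
    have : Tendsto (fun n : ℕ => ((n:ℝ)+1)⁻¹) atTop (𝓝 0) := by
      simpa only [one_div] using tendsto_one_div_add_atTop_nhds_zero_nat (𝕜 := ℝ)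
    simpa using this.const_mul b
  -- splitting of the integral
  have hIab : ∀ n, IntervalIntegrable T volume 0 (e n) :=
    fun n => (hcT.mono (Icc_subset_Icc le_rfl (heb n))).intervalIntegrable_of_Icc
      (le_of_lt (hepos n))
  have hIbb : ∀ n, IntervalIntegrable T volume (e n) b :=
    fun n => (hcT.mono (Icc_subset_Icc (le_of_lt (hepos n)) le_rfl)).intervalIntegrable_of_Icc
      (heb n)
  have hsplit : ∀ n, ∫ x in (0:ℝ)..b, T x = (∫ x in (0:ℝ)..(e n), T x) + ∫ x in (e n)..b, T x :=
    fun n => (intervalIntegral.integral_add_adjacent_intervals (hIab n) (hIbb n)).symm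
  -- lower bound for the right piece
  have hright : ∀ n, (1/b - b) * (v b)^2 - (1/(e n) - e n) * (v (e n))^2
      ≤ ∫ x in (e n)..b, T x := by
    intro n
    exact ftc_core v w (e n) b (hepos n) (heb n)
      (hvc.mono (Icc_subset_Icc (le_of_lt (hepos n)) le_rfl))
      (hwc.mono (Icc_subset_Icc (le_of_lt (hepos n)) le_rfl))
      (fun x hx => hd x ⟨lt_trans (hepos n) hx.1, hx.2⟩)
  -- limits
  have hFsmall : Tendsto (fun n => (1/(e n) - e n) * (v (e n))^2) atTop (𝓝 0) := by
    apply squeeze_zero_norm (a := fun n => C^2 * (1 + b^2) * e n) ?_ ?_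
    · intro n
      have hεpos := hepos n
      have hεb := heb n
      have hvbnd : |v (e n)| ≤ C * e n := hC (e n) ⟨le_of_lt hεpos, hεb⟩
      have hv2b : (v (e n))^2 ≤ (C * e n)^2 := by
        rw [← sq_abs]
        exact pow_le_pow_left₀ (abs_nonneg _) hvbnd 2
      have h1 : |1/(e n) - e n| ≤ 1/(e n) + b := by
        rw [abs_le]
        have h2 : 0 < 1/(e n) := by positivity
        constructor <;> nlinarith
      calc ‖(1/(e n) - e n) * (v (e n))^2‖ = |1/(e n) - e n| * (v (e n))^2 := by
            rw [norm_mul, Real.norm_eq_abs, Real.norm_eq_abs,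
              abs_of_nonneg (sq_nonneg (v (e n)))]
        _ ≤ (1/(e n) + b) * (C * e n)^2 := by
            apply mul_le_mul h1 hv2b (sq_nonneg _) (by positivity)
        _ = C^2 * (e n + b * (e n)^2) := by field_simp
        _ ≤ C^2 * (1 + b^2) * e n := by
            have h3 : e n + b * (e n)^2 ≤ (1 + b^2) * e n := by
              nlinarith [mul_nonneg (mul_nonneg hb.le (hepos n).le) (sub_nonneg.mpr (heb n))]
            calc C^2 * (e n + b * (e n)^2) ≤ C^2 * ((1 + b^2) * e n) :=
                  mul_le_mul_of_nonneg_left h3 (sq_nonneg C)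
              _ = C^2 * (1 + b^2) * e n := by ring
    · simpa using he0.const_mul (C^2 * (1 + b^2))
  have hAsmall : Tendsto (fun n => ∫ x in (0:ℝ)..(e n), T x) atTop (𝓝 0) := by
    apply squeeze_zero_norm (a := fun n => D * e n) ?_ ?_
    · intro n
      have := intervalIntegral.norm_integral_le_of_norm_le_const (C := D)
        (f := T) (a := (0:ℝ)) (b := e n) ?_
      · simpa [abs_of_nonneg (le_of_lt (hepos n))] using this
      · intro x hx
        rw [Set.uIoc_of_le (le_of_lt (hepos n))] at hx
        exact hD x ⟨le_of_lt hx.1, le_trans hx.2 (heb n)⟩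
    · simpa using he0.const_mul D
  -- conclude
  have hlow : ∀ n, (∫ x in (0:ℝ)..(e n), T x) - (1/(e n) - e n) * (v (e n))^2
      ≤ ∫ x in (0:ℝ)..b, T x := by
    intro n
    have h1 := hright n
    rw [hvb] at h1
    have h2 : (0:ℝ) - (1/(e n) - e n) * (v (e n))^2 ≤ ∫ x in (e n)..b, T x := by
      simpa using h1
    rw [hsplit n]
    linarith
  have hlim : Tendsto (fun n => (∫ x in (0:ℝ)..(e n), T x)
      - (1/(e n) - e n) * (v (e n))^2) atTop (𝓝 0) := by
    simpa using hAsmall.sub hFsmall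
  exact le_of_tendsto' hlim hlow

lemma shift_int {f : ℝ → ℝ} {a : ℝ} (hf : IntegrableOn f (Ioi a)) :
    IntegrableOn (fun t => f (t + a)) (Ioi 0) := by
  have h0 : MeasurePreserving (fun x : ℝ => x + a) volume volume :=
    measurePreserving_add_right volume a
  have hf' : Integrable ((Ioi a).indicator f) volume :=
    (integrable_indicator_iff measurableSet_Ioi).mpr hf
  have h2 : Integrable (((Ioi a).indicator f) ∘ (fun x => x + a)) volume :=
    (h0.integrable_comp_emb (Homeomorph.addRight a).measurableEmbedding).mpr hf'
  have h3 : (((Ioi a).indicator f) ∘ (fun x => x + a))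
      = (Ioi 0).indicator (fun t => f (t + a)) := by
    funext t
    simp [Set.indicator_apply, mem_Ioi, lt_add_iff_pos_left]
  rw [h3] at h2
  exact (integrable_indicator_iff measurableSet_Ioi).mp h2

lemma shift_integral (f : ℝ → ℝ) (a : ℝ) :
    ∫ x in Ioi a, f x = ∫ t in Ioi (0:ℝ), f (t + a) := by
  rw [← MeasureTheory.integral_indicator measurableSet_Ioi,
    ← MeasureTheory.integral_indicator measurableSet_Ioi,
    ← integral_add_right_eq_self ((Ioi a).indicator f) a]
  congr 1
  funext t
  simp [Set.indicator_apply, mem_Ioi, lt_add_iff_pos_left]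

set_option maxHeartbeats 1000000 in
/-- Shifted half-line estimate: Dirichlet at `a ≥ 0`, potential centered at `a`. -/
lemma keyA_shift (a : ℝ) (ha : 0 ≤ a) (v w : ℝ → ℝ) (hva : v a = 0)
    (hvc : ContinuousOn v (Ici 0)) (hwc : ContinuousOn w (Ici 0))
    (hd : ∀ x ∈ Ioi (0:ℝ), HasDerivAt v (w x) x)
    (hw2 : IntegrableOn (fun x => (w x)^2) (Ioi 0))
    (hv2 : IntegrableOn (fun x => (v x)^2) (Ioi 0))
    (hx4 : IntegrableOn (fun x => x^4 * (v x)^2) (Ioi 0)) :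
    0 ≤ ∫ x in Ioi a, ((w x)^2 + ((x - a)^2 - 3) * (v x)^2) := by
  have hsub : Ici a ⊆ Ici (0:ℝ) := Ici_subset_Ici.mpr ha
  have hsub' : Ioi a ⊆ Ioi (0:ℝ) := Ioi_subset_Ioi ha
  have hmap : MapsTo (fun t : ℝ => t + a) (Ici 0) (Ici 0) := by
    intro t ht; simp only [mem_Ici] at *; linarith
  have hcomp : ∀ t : ℝ, 0 < t → HasDerivAt (fun s => v (s + a)) (w (t + a)) t := by
    intro t ht
    have h1 : HasDerivAt (fun s : ℝ => s + a) 1 t := (hasDerivAt_id t).add_const a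
    have h2 : HasDerivAt v (w (t + a)) (t + a) := hd (t + a) (by simp [mem_Ioi]; linarith)
    simpa [Function.comp_def] using h2.comp t h1
  have hvm : AEStronglyMeasurable v (volume.restrict (Ioi a)) := by
    have : ContinuousOn v (Ioi a) := hvc.mono (fun x hx => le_of_lt (lt_of_le_of_lt ha hx))
    exact this.aestronglyMeasurable measurableSet_Ioi
  have hx4' : IntegrableOn (fun x => (x - a)^4 * (v x)^2) (Ioi a) := by
    apply Integrable.mono' (hx4.mono_set hsub')
    · exact (((aestronglyMeasurable_id.sub aestronglyMeasurable_const).pow 4).mul (hvm.pow 2))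
    · rw [ae_restrict_iff' measurableSet_Ioi]
      filter_upwards with x hx
      have hx0 : 0 < x := lt_of_le_of_lt ha hx
      have h1 : (x - a)^4 ≤ x^4 := by
        apply pow_le_pow_left₀ (by simp only [mem_Ioi] at hx; linarith) (by linarith)
      rw [Real.norm_eq_abs, abs_of_nonneg (by positivity)]
      nlinarith [sq_nonneg (v x)]
  have hg0 : (fun t : ℝ => v (t + a)) 0 = 0 := by simpa using hva
  have hgc : ContinuousOn (fun t : ℝ => v (t + a)) (Ici 0) :=
    hvc.comp (Continuous.continuousOn (continuous_id.add continuous_const)) hmap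
  have hgwc : ContinuousOn (fun t : ℝ => w (t + a)) (Ici 0) :=
    hwc.comp (Continuous.continuousOn (continuous_id.add continuous_const)) hmap
  have hgw2 : IntegrableOn (fun t : ℝ => (w (t + a))^2) (Ioi 0) :=
    shift_int (f := fun x => (w x)^2) (hw2.mono_set hsub')
  have hgv2 : IntegrableOn (fun t : ℝ => (v (t + a))^2) (Ioi 0) :=
    shift_int (f := fun x => (v x)^2) (hv2.mono_set hsub')
  have hgx4 : IntegrableOn (fun t : ℝ => t^4 * (v (t + a))^2) (Ioi 0) := by
    have h5 := shift_int (f := fun x => (x - a)^4 * (v x)^2) hx4'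
    apply h5.congr
    filter_upwards with t
    simp
  have hkey := keyA (fun t => v (t + a)) (fun t => w (t + a)) hg0 hgc hgwc
    (fun t ht => hcomp t ht) hgw2 hgv2 hgx4
  rw [shift_integral]
  simpa using hkey
set_option maxHeartbeats 1000000 in
/-- Reflected interval estimate: Dirichlet at `0` and `a`, potential centered at `a`. -/
lemma keyB_refl (a : ℝ) (ha : 0 < a) (v w : ℝ → ℝ) (hv0 : v 0 = 0) (hva : v a = 0)
    (hvc : ContinuousOn v (Icc 0 a)) (hwc : ContinuousOn w (Icc 0 a))
    (hd : ∀ x ∈ Ioo (0:ℝ) a, HasDerivAt v (w x) x) :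
    0 ≤ ∫ x in (0:ℝ)..a, ((w x)^2 + ((x - a)^2 - 3) * (v x)^2) := by
  have hmap : MapsTo (fun t : ℝ => a - t) (Icc 0 a) (Icc 0 a) := by
    intro t ht; simp only [mem_Icc] at *; constructor <;> linarith
  have hkey := keyB a ha (fun t => v (a - t)) (fun t => -(w (a - t)))
    (by simpa using hva) (by simpa using hv0)
    (hvc.comp (Continuous.continuousOn (continuous_const.sub continuous_id)) hmap)
    ((hwc.comp (Continuous.continuousOn (continuous_const.sub continuous_id)) hmap).neg)
    (by
      intro t ht
      have h1 : HasDerivAt (fun s : ℝ => a - s) (-1) t := by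
        simpa using (hasDerivAt_const t a).fun_sub (hasDerivAt_id' t)
      have h2 : HasDerivAt v (w (a - t)) (a - t) := by
        apply hd
        simp only [mem_Ioo] at ht ⊢
        constructor <;> linarith
      simpa [Function.comp_def] using h2.comp t h1)
  have heq : ∫ t in (0:ℝ)..a, ((-(w (a - t)))^2 + (t^2 - 3) * (v (a - t))^2)
      = ∫ x in (0:ℝ)..a, ((w x)^2 + ((x - a)^2 - 3) * (v x)^2) := by
    have h1 : ∀ t : ℝ, ((-(w (a - t)))^2 + (t^2 - 3) * (v (a - t))^2)
        = (fun x => (w x)^2 + ((x - a)^2 - 3) * (v x)^2) (a - t) := by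
      intro t; simp only; ring_nf
    rw [intervalIntegral.integral_congr (g := fun t =>
      (fun x => (w x)^2 + ((x - a)^2 - 3) * (v x)^2) (a - t)) (fun t _ => h1 t)]
    have h2 := intervalIntegral.integral_comp_sub_left (a := 0) (b := a)
      (fun x => (w x)^2 + ((x - a)^2 - 3) * (v x)^2) a
    simpa using h2
  rw [← heq]
  exact hkey

lemma pot_int (c : ℝ) (v w : ℝ → ℝ)
    (hvc : ContinuousOn v (Ici 0)) (hwc : ContinuousOn w (Ici 0))
    (hw2 : IntegrableOn (fun x => (w x)^2) (Ioi 0))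
    (hv2 : IntegrableOn (fun x => (v x)^2) (Ioi 0))
    (hx4 : IntegrableOn (fun x => x^4 * (v x)^2) (Ioi 0)) :
    IntegrableOn (fun x => (w x)^2 + ((x + c)^2 - 3) * (v x)^2) (Ioi 0) := by
  have hvm : AEStronglyMeasurable v (volume.restrict (Ioi (0:ℝ))) :=
    (hvc.mono Ioi_subset_Ici_self).aestronglyMeasurable measurableSet_Ioi
  have hwm : AEStronglyMeasurable w (volume.restrict (Ioi (0:ℝ))) :=
    (hwc.mono Ioi_subset_Ici_self).aestronglyMeasurable measurableSet_Ioi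
  apply Integrable.mono' ((hw2.add (hx4.const_mul 2)).add (hv2.const_mul (2*c^2+5)))
  · exact (hwm.pow 2).add
      ((((aestronglyMeasurable_id.add aestronglyMeasurable_const).pow 2).sub
        aestronglyMeasurable_const).mul (hvm.pow 2))
  · filter_upwards with x
    simp only [Pi.add_apply]
    rw [Real.norm_eq_abs, abs_le]
    have hub : ((x+c)^2 - 3) * (v x)^2 ≤ (2*x^4 + 2*c^2 + 5) * (v x)^2 :=
      mul_le_mul_of_nonneg_right
        (by nlinarith [sq_nonneg (x - c), sq_nonneg (x^2 - 1)]) (sq_nonneg _)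
    have hlb : (-3:ℝ) * (v x)^2 ≤ ((x+c)^2 - 3) * (v x)^2 :=
      mul_le_mul_of_nonneg_right (by nlinarith [sq_nonneg (x+c)]) (sq_nonneg _)
    constructor <;> nlinarith [sq_nonneg (w x), sq_nonneg (v x),
      (by positivity : (0:ℝ) ≤ x^4 * (v x)^2)]

/-- nonnegativity of the restricted operator `T_{0,k}` for `α < 0`: the quadratic
form of `T^α_{1,k}` is nonnegative on real-valued `V ∈ W²(𝒢)` vanishing at the vertex and at
`a_k = α/(2k−N)` on the first `k` edges, with Kirchhoff flux condition. -/
theorem T0k_nonneg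
    (N k : ℕ) (hN : 3 ≤ N) (α : ℝ) (hα : α < 0) (hk1 : 1 ≤ k) (hk2 : k ≤ (N - 1) / 2)
    (V : Fin N → ℝ → ℝ) (hW2 : ∀ j, MemW2r (V j))
    (h0 : ∀ j, V j 0 = 0)
    (hflux : (∑ j, deriv (V j) 0) = 0)
    (hak : ∀ j : Fin N, (j : ℕ) < k → V j (α / (2*(k:ℝ) - (N:ℝ))) = 0) :
    0 ≤ ∑ j, ∫ x in Set.Ioi (0:ℝ),
      ((deriv (V j) x)^2 +
        ((if (j : ℕ) < k then (x - α / (2*(k:ℝ) - (N:ℝ)))^2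
          else (x + α / (2*(k:ℝ) - (N:ℝ)))^2) - 3) * (V j x)^2) := by
  classical
  set a : ℝ := α / (2*(k:ℝ) - (N:ℝ)) with ha_def
  have h2k : (2*(k:ℝ) - (N:ℝ)) < 0 := by
    have hN : 2*k < N := by
      have h1 : 2*k ≤ 2*((N-1)/2) := Nat.mul_le_mul_left 2 hk2
      have h2 : 2*((N-1)/2) ≤ N - 1 := by omega
      omega
    have : (2*(k:ℝ)) < (N:ℝ) := by exact_mod_cast hN
    linarith
  have ha : 0 < a := div_pos_of_neg_of_neg hα h2k
  apply Finset.sum_nonneg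
  intro j _
  -- extract regularity and integrability from `MemW2r`
  obtain ⟨⟨⟨hvc, hdiff, hL2v, hL2w⟩, hwc, _, _⟩, hL2x2v⟩ := hW2 j
  set v : ℝ → ℝ := V j with hv_def
  set w : ℝ → ℝ := deriv (V j) with hw_def
  have hd : ∀ x ∈ Set.Ioi (0:ℝ), HasDerivAt v (w x) x :=
    fun x hx => (hdiff x hx).hasDerivAt
  have hv2 : IntegrableOn (fun x => (v x)^2) (Set.Ioi 0) := hL2v.integrable_sq
  have hw2 : IntegrableOn (fun x => (w x)^2) (Set.Ioi 0) := hL2w.integrable_sq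
  have hx4 : IntegrableOn (fun x => x^4 * (v x)^2) (Set.Ioi 0) := by
    have h : IntegrableOn (fun x => (x^2 * v x)^2) (Set.Ioi 0) := hL2x2v.integrable_sq
    exact h.congr (Filter.Eventually.of_forall (fun x => by simp only; ring))
  by_cases hj : (j:ℕ) < k
  · simp only [if_pos hj]
    have hva : v a = 0 := hak j hj
    have hint : IntegrableOn (fun x => (w x)^2 + ((x - a)^2 - 3) * (v x)^2) (Set.Ioi 0) := by
      have h := pot_int (-a) v w hvc hwc hw2 hv2 hx4
      simpa [sub_eq_add_neg] using h
    have hsplit : ∫ x in Set.Ioi (0:ℝ), ((w x)^2 + ((x - a)^2 - 3) * (v x)^2)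
        = (∫ x in Set.Ioc (0:ℝ) a, ((w x)^2 + ((x - a)^2 - 3) * (v x)^2))
          + ∫ x in Set.Ioi a, ((w x)^2 + ((x - a)^2 - 3) * (v x)^2) := by
      rw [← Set.Ioc_union_Ioi_eq_Ioi ha.le]
      exact setIntegral_union (Set.Ioc_disjoint_Ioi le_rfl) measurableSet_Ioi
        (hint.mono_set Set.Ioc_subset_Ioi_self) (hint.mono_set (Set.Ioi_subset_Ioi ha.le))
    have hpiece1 : 0 ≤ ∫ x in Set.Ioc (0:ℝ) a, ((w x)^2 + ((x - a)^2 - 3) * (v x)^2) := by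
      have h1 := keyB_refl a ha v w (h0 j) hva
        (hvc.mono (fun x hx => hx.1)) (hwc.mono (fun x hx => hx.1))
        (fun x hx => hd x hx.1)
      rwa [intervalIntegral.integral_of_le ha.le] at h1
    have hpiece2 : 0 ≤ ∫ x in Set.Ioi a, ((w x)^2 + ((x - a)^2 - 3) * (v x)^2) :=
      keyA_shift a ha.le v w hva hvc hwc hd hw2 hv2 hx4
    calc (0:ℝ) ≤ (∫ x in Set.Ioc (0:ℝ) a, ((w x)^2 + ((x - a)^2 - 3) * (v x)^2))
          + ∫ x in Set.Ioi a, ((w x)^2 + ((x - a)^2 - 3) * (v x)^2) := by linarith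
      _ = _ := hsplit.symm
  · simp only [if_neg hj]
    have hbase := keyA v w (h0 j) hvc hwc hd hw2 hv2 hx4
    have hbint : IntegrableOn (fun x => (w x)^2 + (x^2 - 3) * (v x)^2) (Set.Ioi 0) := by
      have h := pot_int 0 v w hvc hwc hw2 hv2 hx4
      simpa using h
    have hint : IntegrableOn (fun x => (w x)^2 + ((x + a)^2 - 3) * (v x)^2) (Set.Ioi 0) :=
      pot_int a v w hvc hwc hw2 hv2 hx4
    have hmono : (∫ x in Set.Ioi (0:ℝ), ((w x)^2 + (x^2 - 3) * (v x)^2))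
        ≤ ∫ x in Set.Ioi (0:ℝ), ((w x)^2 + ((x + a)^2 - 3) * (v x)^2) := by
      apply setIntegral_mono_on hbint hint measurableSet_Ioi
      intro x hx
      have hx0 : 0 < x := hx
      have : (x^2 - 3) * (v x)^2 ≤ ((x + a)^2 - 3) * (v x)^2 :=
        mul_le_mul_of_nonneg_right (by nlinarith) (sq_nonneg _)
      linarith
    linarith
end
end

section
/- Uniqueness of L² solutions of the shifted Hermite equation with eigenvalue 3: Let a ∈ ℝ and let v : (0,∞) → ℂ be twice continuously differentiable with v ∈ L²(0,∞) and −v''(x) + ((x−a)² − 3)v(x) = 0 for all x > 0. Then there is a constant c ∈ ℂ such that v(x) = c (a−x) e^{−(x−a)²/2} for all x > 0; that is, v is a scalar multiple of the derivative of x ↦ e^{−(x−a)²/2}. -/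
open MeasureTheory Set Filter

noncomputable section

def Eaux (a : ℝ) : ℝ → ℂ := fun x => Complex.exp ((((x - a)^2/2 : ℝ)) : ℂ)
def Einvaux (a : ℝ) : ℝ → ℂ := fun x => Complex.exp (((-(x - a)^2/2 : ℝ)) : ℂ)

lemma Eaux_mul_Einvaux (a x : ℝ) : Eaux a x * Einvaux a x = 1 := by
  rw [Eaux, Einvaux, ← Complex.exp_add]
  have : ((((x - a)^2/2 : ℝ)) : ℂ) + (((-(x - a)^2/2 : ℝ)) : ℂ) = 0 := by push_cast; ring
  rw [this, Complex.exp_zero]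

lemma Einvaux_eq (a x : ℝ) : Einvaux a x = ((Real.exp (-(x-a)^2/2) : ℝ) : ℂ) := by
  rw [Einvaux, Complex.ofReal_exp]

lemma Eaux_sq (a x : ℝ) : Eaux a x ^ 2 = ((Real.exp ((x-a)^2) : ℝ) : ℂ) := by
  rw [Eaux, Complex.ofReal_exp, ← Complex.exp_nat_mul]
  congr 1
  push_cast
  ring

lemma hasDerivAt_Eaux (a x : ℝ) : HasDerivAt (Eaux a) (((x - a : ℝ) : ℂ) * Eaux a x) x := by
  have h0 : HasDerivAt (fun y : ℝ => (y - a)^2/2) (x - a) x := by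
    have := (((hasDerivAt_id x).sub_const a).pow 2).div_const 2
    simp only [id] at this
    convert this using 1 <;> try rfl
    norm_num
  have := (h0.ofReal_comp).cexp
  convert this using 1
  · rfl
  rw [Eaux]; ring

lemma hasDerivAt_Einvaux (a x : ℝ) : HasDerivAt (Einvaux a) (((a - x : ℝ) : ℂ) * Einvaux a x) x := by
  have h0 : HasDerivAt (fun y : ℝ => -(y - a)^2/2) (a - x) x := by
    have := ((((hasDerivAt_id x).sub_const a).pow 2).div_const 2).neg
    simp only [id] at this
    convert this using 1 <;> try rfl
    · funext y; simp only [Pi.neg_apply, Pi.pow_apply]; ring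
    · norm_num
  have := (h0.ofReal_comp).cexp
  convert this using 1
  · rfl
  rw [Einvaux]; ring

lemma constOnIoi {f : ℝ → ℂ} {c : ℝ} (hf : ∀ x ∈ Set.Ioi c, HasDerivAt f 0 x)
    {x y : ℝ} (hx : x ∈ Set.Ioi c) (hy : y ∈ Set.Ioi c) : f x = f y := by
  have h := (convex_Ioi c).norm_image_sub_le_of_norm_hasDerivWithin_le
    (C := (0:ℝ)) (f' := fun _ => (0:ℂ)) (fun z hz => (hf z hz).hasDerivWithinAt)
    (fun z _ => by simp) hx hy
  have h2 : f y = f x := by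
    have := le_antisymm (by simpa using h) (norm_nonneg (f y - f x))
    exact sub_eq_zero.mp (by simpa using this)
  exact h2.symm

set_option maxHeartbeats 2000000 in
/-- every `L²(0,∞)`, twice continuously differentiable solution of the shifted
Hermite equation `-v'' + ((x-a)² - 3) v = 0` on `(0,∞)` is a scalar multiple of the explicit
Gaussian-type solution. -/
theorem hermite_halfline_eigenvalue_three (a : ℝ) (v : ℝ → ℂ)
    (h1 : ∀ x ∈ Set.Ioi (0:ℝ), DifferentiableAt ℝ v x)
    (h2 : ∀ x ∈ Set.Ioi (0:ℝ), DifferentiableAt ℝ (deriv v) x)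
    (h3 : ContinuousOn (deriv (deriv v)) (Set.Ioi (0:ℝ)))
    (hL2 : MeasureTheory.MemLp v 2 mu)
    (heq : ∀ x ∈ Set.Ioi (0:ℝ),
      -(deriv (deriv v) x) + (((x - a)^2 - 3 : ℝ) : ℂ) * v x = 0) :
    ∃ c : ℂ, ∀ x ∈ Set.Ioi (0:ℝ), v x = c * (((a - x) * Real.exp (-(x - a)^2/2) : ℝ) : ℂ) := by
  set V := deriv v with hVdef
  set W := deriv (deriv v) with hWdef
  have hvd : ∀ x ∈ Set.Ioi (0:ℝ), HasDerivAt v (V x) x := fun x hx => (h1 x hx).hasDerivAt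
  have hVd : ∀ x ∈ Set.Ioi (0:ℝ), HasDerivAt V (W x) x := fun x hx => (h2 x hx).hasDerivAt
  have heq' : ∀ x ∈ Set.Ioi (0:ℝ), W x = (((x - a)^2 - 3 : ℝ) : ℂ) * v x := by
    intro x hx
    have h := heq x hx
    linear_combination -h
  -- auxiliary functions
  set ψ : ℝ → ℂ := fun x => v x * Eaux a x with hψdef
  set ψ₁ : ℝ → ℂ := fun x => (V x + ((x - a : ℝ) : ℂ) * v x) * Eaux a x with hψ₁def
  set h : ℝ → ℂ := fun x =>
    (((x - a : ℝ) : ℂ) * V x + (((x - a)^2 - 1 : ℝ) : ℂ) * v x) * Einvaux a x with hhdef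
  have hTd : ∀ x : ℝ, HasDerivAt (fun y : ℝ => ((y - a : ℝ) : ℂ)) 1 x := by
    intro x
    have : HasDerivAt (fun y : ℝ => y - a) 1 x := (hasDerivAt_id x).sub_const a
    exact this.ofReal_comp
  have hT2d : ∀ x : ℝ, HasDerivAt (fun y : ℝ => (((y - a)^2 - 1 : ℝ) : ℂ))
      (2 * ((x - a : ℝ) : ℂ)) x := by
    intro x
    have : HasDerivAt (fun y : ℝ => (y - a)^2 - 1) (2*(x-a)) x := by
      have := (((hasDerivAt_id x).sub_const a).pow 2).sub_const 1
      simp only [id] at this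
      convert this using 1 <;> try rfl
      ring
    have := this.ofReal_comp
    convert this using 1; push_cast; ring
  -- derivative of psi
  have hψd : ∀ x ∈ Set.Ioi (0:ℝ), HasDerivAt ψ (ψ₁ x) x := by
    intro x hx
    have := (hvd x hx).mul (hasDerivAt_Eaux a x)
    convert this using 1 <;> try rfl
    rw [hψ₁def]; ring
  -- derivative of h is zero
  have hhd : ∀ x ∈ Set.Ioi (0:ℝ), HasDerivAt h 0 x := by
    intro x hx
    have hsum : HasDerivAt (fun y : ℝ => ((y - a : ℝ) : ℂ) * V y + (((y - a)^2 - 1 : ℝ) : ℂ) * v y)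
        (1 * V x + ((x - a : ℝ) : ℂ) * W x +
          (2 * ((x - a : ℝ) : ℂ) * v x + (((x - a)^2 - 1 : ℝ) : ℂ) * V x)) x :=
      ((hTd x).mul (hVd x hx)).add ((hT2d x).mul (hvd x hx))
    have := hsum.mul (hasDerivAt_Einvaux a x)
    convert this using 1 <;> try rfl
    rw [heq' x hx]
    push_cast
    ring
  -- h is constant K
  have h1mem : (1:ℝ) ∈ Set.Ioi (0:ℝ) := by norm_num
  set K := h 1 with hKdef
  have hhK : ∀ x ∈ Set.Ioi (0:ℝ), h x = K := fun x hx => constOnIoi hhd hx h1mem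
  clear_value K
  -- the invariant
  have hinv : ∀ x ∈ Set.Ioi (0:ℝ),
      ((x - a : ℝ) : ℂ) * V x + (((x - a)^2 - 1 : ℝ) : ℂ) * v x = K * Eaux a x := by
    intro x hx
    have h0 : (((x - a : ℝ) : ℂ) * V x + (((x - a)^2 - 1 : ℝ) : ℂ) * v x) * Einvaux a x = K :=
      hhK x hx
    calc ((x - a : ℝ) : ℂ) * V x + (((x - a)^2 - 1 : ℝ) : ℂ) * v x
        = (((x - a : ℝ) : ℂ) * V x + (((x - a)^2 - 1 : ℝ) : ℂ) * v x) * (Einvaux a x * Eaux a x) := by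
          rw [mul_comm (Einvaux a x), Eaux_mul_Einvaux, mul_one]
      _ = K * Eaux a x := by rw [← mul_assoc, h0]
  -- key: T * ψ₁ - ψ = K * E^2
  have hTψ : ∀ x ∈ Set.Ioi (0:ℝ),
      ((x - a : ℝ) : ℂ) * ψ₁ x - ψ x = K * (Eaux a x)^2 := by
    intro x hx
    rw [hψ₁def, hψdef]
    have := hinv x hx
    have e2 : (Eaux a x)^2 = Eaux a x * Eaux a x := sq (Eaux a x) ▸ rfl
    calc ((x - a : ℝ) : ℂ) * ((V x + ((x - a : ℝ) : ℂ) * v x) * Eaux a x) - v x * Eaux a x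
        = (((x - a : ℝ) : ℂ) * V x + (((x - a)^2 - 1 : ℝ) : ℂ) * v x) * Eaux a x := by
          push_cast; ring
      _ = K * (Eaux a x)^2 := by rw [this]; ring
  -- derivative of psi1
  have hψ₁d : ∀ x ∈ Set.Ioi (0:ℝ), HasDerivAt ψ₁ (2 * K * (Eaux a x)^2) x := by
    intro x hx
    have hsum : HasDerivAt (fun y : ℝ => V y + ((y - a : ℝ) : ℂ) * v y)
        (W x + (1 * v x + ((x - a : ℝ) : ℂ) * V x)) x :=
      (hVd x hx).add ((hTd x).mul (hvd x hx))
    have hprod := hsum.mul (hasDerivAt_Eaux a x)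
    convert hprod using 1 <;> try rfl
    have hi := hinv x hx
    rw [heq' x hx]
    have : (2 : ℂ) * K * (Eaux a x)^2
        = 2 * (((x - a : ℝ) : ℂ) * V x + (((x - a)^2 - 1 : ℝ) : ℂ) * v x) * Eaux a x := by
      rw [hi]; ring
    rw [this]
    push_cast
    ring
  by_cases hK0 : K = 0
  · -- K = 0 : v is a multiple of the Gaussian solution
    have hψ₁d0 : ∀ x ∈ Set.Ioi (0:ℝ), HasDerivAt ψ₁ 0 x := by
      intro x hx
      have := hψ₁d x hx
      rwa [hK0, mul_zero, zero_mul] at this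
    set B := ψ₁ 1 with hBdef
    have hψ₁const : ∀ x ∈ Set.Ioi (0:ℝ), ψ₁ x = B := fun x hx => constOnIoi hψ₁d0 hx h1mem
    have hLd : ∀ x ∈ Set.Ioi (0:ℝ), HasDerivAt (fun y : ℝ => ψ y - B * (y:ℂ)) 0 x := by
      intro x hx
      have hid : HasDerivAt (fun y : ℝ => ((y:ℝ):ℂ)) 1 x := by
        have : HasDerivAt (fun y : ℝ => y) 1 x := hasDerivAt_id x
        exact this.ofReal_comp
      have hBx : HasDerivAt (fun y : ℝ => B * ((y:ℝ):ℂ)) B x := by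
        simpa using hid.const_mul B
      have := (hψd x hx).sub hBx
      rwa [hψ₁const x hx, sub_self] at this
    set C := ψ 1 - B with hCdef
    have hLconst : ∀ x ∈ Set.Ioi (0:ℝ), ψ x - B * (x:ℂ) = C := by
      intro x hx
      have := constOnIoi hLd hx h1mem
      simpa using this
    have hT1 := hTψ 1 h1mem
    rw [hK0, zero_mul, hψ₁const 1 h1mem] at hT1
    have hC : C = -(a:ℂ) * B := by
      have hp1 : ψ 1 = ((1 - a : ℝ):ℂ) * B := by linear_combination -hT1
      rw [hCdef, hp1]
      push_cast
      ring
    refine ⟨-B, ?_⟩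
    intro x hx
    have hvx : v x = ψ x * Einvaux a x := by
      calc v x = v x * (Eaux a x * Einvaux a x) := by rw [Eaux_mul_Einvaux, mul_one]
        _ = ψ x * Einvaux a x := by rw [hψdef]; ring
    have hψx : ψ x = B * (x:ℂ) + C := by linear_combination hLconst x hx
    rw [hvx, hψx, hC, Einvaux_eq]
    push_cast
    ring
  · exfalso
    have hKpos : 0 < ‖K‖ := norm_pos_iff.mpr hK0
    set x₀ : ℝ := max 1 (a + 1) with hx₀def
    set x₁ : ℝ := x₀ + 1 with hx₁def
    have hx₀pos : (0:ℝ) < x₀ := lt_of_lt_of_le one_pos (le_max_left _ _)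
    have hx₀a : a + 1 ≤ x₀ := le_max_right _ _
    have hsub : Set.Ioi x₀ ⊆ Set.Ioi (0:ℝ) := fun y hy => lt_trans hx₀pos hy
    have hx₁a : a + 2 ≤ x₁ := by rw [hx₁def]; linarith
    have hx₁pos : 0 < x₁ := by rw [hx₁def]; linarith
    set φ : ℝ → ℂ := fun y => ψ y / ((y - a : ℝ) : ℂ) with hφdef
    set f : ℝ → ℝ := fun s => Real.exp ((s-a)^2) / (s-a)^2 with hfdef
    -- derivative of φ on Ioi x₀
    have hφd : ∀ y ∈ Set.Ioi x₀, HasDerivAt φ (K * ((f y : ℝ) : ℂ)) y := by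
      intro y hy
      have hya : (1:ℝ) < y - a := by
        have : x₀ < y := hy
        linarith
      have hne' : (y - a : ℝ) ≠ 0 := by linarith
      have hne : ((y - a : ℝ) : ℂ) ≠ 0 := Complex.ofReal_ne_zero.mpr hne'
      have hdiv := (hψd y (hsub hy)).div (hTd y) hne
      convert hdiv using 1 <;> try rfl
      have hkey := hTψ y (hsub hy)
      rw [Eaux_sq] at hkey
      have hcast : ((f y : ℝ) : ℂ)
          = ((Real.exp ((y-a)^2) : ℝ) : ℂ) / ((y - a:ℝ) : ℂ)^2 := by
        rw [hfdef, Complex.ofReal_div, Complex.ofReal_pow]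
      rw [hcast, ← mul_div_assoc]
      congr 1
      linear_combination -hkey
    -- basic facts about f
    have hfpos : ∀ s : ℝ, a < s → 0 < f s := by
      intro s hs
      rw [hfdef]
      have h0 : (0:ℝ) < s - a := by linarith
      positivity
    have hfcont : ContinuousOn f (Set.Ici x₁) := by
      rw [hfdef]
      apply ContinuousOn.div
      · fun_prop
      · fun_prop
      · intro s hs
        have h0 : a + 2 ≤ s := le_trans hx₁a hs
        have h1 : (0:ℝ) < s - a := by linarith
        positivity
    have hfint : ∀ b c : ℝ, x₁ ≤ b → x₁ ≤ c → IntervalIntegrable f volume b c := by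
      intro b c hb hc
      apply (hfcont.mono ?_).intervalIntegrable
      intro s hs
      rcases Set.mem_uIcc.1 hs with h | h
      · exact le_trans hb h.1
      · exact le_trans hc h.1
    -- FTC
    have key : ∀ x : ℝ, x₁ ≤ x → φ x = φ x₁ + K * ((∫ s in x₁..x, f s : ℝ) : ℂ) := by
      intro x hx
      have hderiv : ∀ s ∈ Set.uIcc x₁ x, HasDerivAt φ (K * ((f s : ℝ):ℂ)) s := by
        intro s hs
        rw [Set.uIcc_of_le hx] at hs
        refine hφd s ?_
        have h4 : x₁ ≤ s := hs.1
        have h5 : x₀ < s := by rw [hx₁def] at h4; linarith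
        exact h5
      have hint : IntervalIntegrable (fun s => K * ((f s : ℝ):ℂ)) volume x₁ x := by
        apply ContinuousOn.intervalIntegrable
        apply ContinuousOn.mul continuousOn_const
        apply Complex.continuous_ofReal.comp_continuousOn
        apply hfcont.mono
        rw [Set.uIcc_of_le hx]
        exact Set.Icc_subset_Ici_self
      have hftc := intervalIntegral.integral_eq_sub_of_hasDerivAt hderiv hint
      have hInt2 : (∫ s in x₁..x, K * ((f s : ℝ):ℂ)) = K * ((∫ s in x₁..x, f s : ℝ):ℂ) := by
        rw [intervalIntegral.integral_const_mul, intervalIntegral.integral_ofReal]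
      rw [hInt2] at hftc
      linear_combination -hftc
    have hM0 : 0 ≤ ‖φ x₁‖ := norm_nonneg _
    -- lower bound for the integral
    have hIlow : ∀ x : ℝ, x₁ + 1 ≤ x →
        Real.exp ((x-1-a)^2) / (x-a)^2 ≤ ∫ s in x₁..x, f s := by
      intro x hx
      have hia : IntervalIntegrable f volume x₁ (x-1) := hfint _ _ le_rfl (by linarith)
      have hib : IntervalIntegrable f volume (x-1) x := hfint _ _ (by linarith) (by linarith)
      have hsplit : (∫ s in x₁..(x-1), f s) + (∫ s in (x-1)..x, f s) = ∫ s in x₁..x, f s :=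
        intervalIntegral.integral_add_adjacent_intervals hia hib
      have hnn : 0 ≤ ∫ s in x₁..(x-1), f s := by
        apply intervalIntegral.integral_nonneg (by linarith)
        intro u hu
        have h6 : a < u := by
          have := hu.1
          linarith
        exact (hfpos u h6).le
      have hmono : (∫ _s in (x-1)..x, (Real.exp ((x-1-a)^2) / (x-a)^2)) ≤ ∫ s in (x-1)..x, f s := by
        apply intervalIntegral.integral_mono_on (by linarith) intervalIntegrable_const hib
        intro s hs
        rw [hfdef]
        have hs1 : x - 1 ≤ s := hs.1
        have hs2 : s ≤ x := hs.2
        have h0 : (0:ℝ) < x - 1 - a := by linarith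
        apply div_le_div₀ (Real.exp_pos _).le
        · exact Real.exp_le_exp.2 (by nlinarith)
        · nlinarith
        · nlinarith
      have hconst : (∫ _s in (x-1)..x, (Real.exp ((x-1-a)^2) / (x-a)^2))
          = Real.exp ((x-1-a)^2) / (x-a)^2 := by
        rw [intervalIntegral.integral_const]
        have h7 : x - (x-1) = (1:ℝ) := by ring
        rw [h7, one_smul]
      rw [hconst] at hmono
      linarith
    -- the threshold
    set X₀ : ℝ := max (x₁ + 1) (a + max 8 ((1 + ‖φ x₁‖)/‖K‖)) with hX₀def
    have hX₀pos : 0 < X₀ := by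
      have h1' : x₁ + 1 ≤ X₀ := le_max_left _ _
      linarith
    -- eventual lower bound on ‖v‖
    have hbig : ∀ x ∈ Set.Ioi X₀, 1 ≤ ‖v x‖ := by
      intro x hxX
      have hxX' : X₀ < x := hxX
      have hxx1 : x₁ + 1 ≤ x := le_trans (le_max_left _ _) hxX'.le
      have hy8 : (8:ℝ) ≤ x - a := by
        have h2' := le_trans (le_max_right _ _) hxX'.le
        have h8 := le_max_left (8:ℝ) ((1 + ‖φ x₁‖)/‖K‖)
        linarith
      have hyM : (1 + ‖φ x₁‖)/‖K‖ ≤ x - a := by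
        have h2' := le_trans (le_max_right _ _) hxX'.le
        have h8 := le_max_right (8:ℝ) ((1 + ‖φ x₁‖)/‖K‖)
        linarith
      have hy0 : (0:ℝ) < x - a := by linarith
      have hx0 : x ∈ Set.Ioi (0:ℝ) := by
        have h9 : x₀ < x := by rw [hx₁def] at hxx1; linarith
        exact hsub h9
      have hne : ((x - a : ℝ) : ℂ) ≠ 0 := Complex.ofReal_ne_zero.mpr (by linarith)
      have hI := hIlow x hxx1
      have hφx := key x (by linarith)
      set I := ∫ s in x₁..x, f s with hIdef
      clear_value I
      have hI0 : 0 ≤ I := le_trans (by positivity) hI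
      have hKI : ‖K * ((I:ℝ):ℂ)‖ = ‖K‖ * I := by
        rw [norm_mul, Complex.norm_real, Real.norm_eq_abs, abs_of_nonneg hI0]
      have hφnorm : ‖K‖ * I - ‖φ x₁‖ ≤ ‖φ x‖ := by
        have h9 : K * ((I:ℝ):ℂ) = φ x - φ x₁ := by rw [hφx]; ring
        have h10 := norm_sub_le (φ x) (φ x₁)
        rw [← h9, hKI] at h10
        linarith
      have hψφ : ψ x = φ x * ((x - a:ℝ):ℂ) := by
        rw [hφdef]
        exact (div_mul_cancel₀ _ hne).symm
      have hvx : v x = ψ x * Einvaux a x := by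
        calc v x = v x * (Eaux a x * Einvaux a x) := by rw [Eaux_mul_Einvaux, mul_one]
          _ = ψ x * Einvaux a x := by rw [hψdef]; ring
      have hnormv : ‖v x‖ = ‖φ x‖ * ((x - a) * Real.exp (-(x-a)^2/2)) := by
        rw [hvx, hψφ, Einvaux_eq, norm_mul, norm_mul, Complex.norm_real, Complex.norm_real,
          Real.norm_eq_abs, Real.norm_eq_abs, abs_of_nonneg hy0.le,
          abs_of_nonneg (Real.exp_pos _).le]
        ring
      -- numeric estimates
      have hE2 : Real.exp ((x-1-a)^2) * Real.exp (-(x-a)^2/2)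
          = Real.exp ((x-1-a)^2 - (x-a)^2/2) := by
        rw [← Real.exp_add]
        ring_nf
      have hA : Real.exp (2*(x-a)) ≤ Real.exp ((x-1-a)^2 - (x-a)^2/2) :=
        Real.exp_le_exp.2 (by nlinarith)
      have hEy : Real.exp (2*(x-a)) = Real.exp (x-a) * Real.exp (x-a) := by
        rw [← Real.exp_add]
        ring_nf
      have hexpy : (x-a) + 1 ≤ Real.exp (x-a) := Real.add_one_le_exp _
      have hEpos : 0 < Real.exp (x-a) := Real.exp_pos _
      have hE3 : (x-a) * Real.exp (-(x-a)^2/2) ≤ 1 := by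
        have h5 : (x-a) ≤ Real.exp ((x-a)^2/2) :=
          le_trans (by nlinarith) (Real.add_one_le_exp ((x-a)^2/2))
        have h6 : -(x-a)^2/2 = -((x-a)^2/2) := by ring
        rw [h6, Real.exp_neg, ← div_eq_mul_inv]
        exact (div_le_one (Real.exp_pos _)).2 h5
      have hc1 : ‖K‖ * (Real.exp ((x-1-a)^2)/(x-a)^2) - ‖φ x₁‖ ≤ ‖φ x‖ := by
        have h11 := mul_le_mul_of_nonneg_left hI (norm_nonneg K)
        linarith
      have hstep1 : (‖K‖ * (Real.exp ((x-1-a)^2)/(x-a)^2) - ‖φ x₁‖) * ((x-a) * Real.exp (-(x-a)^2/2))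
          ≤ ‖φ x‖ * ((x-a) * Real.exp (-(x-a)^2/2)) := by
        apply mul_le_mul_of_nonneg_right hc1
        positivity
      have hstep2 : (‖K‖ * (Real.exp ((x-1-a)^2)/(x-a)^2) - ‖φ x₁‖) * ((x-a) * Real.exp (-(x-a)^2/2))
          = ‖K‖ * (Real.exp ((x-1-a)^2 - (x-a)^2/2)/(x-a))
            - ‖φ x₁‖ * ((x-a) * Real.exp (-(x-a)^2/2)) := by
        rw [← hE2]
        field_simp
      have hstep3 : ‖K‖ * (Real.exp (2*(x-a))/(x-a))
          ≤ ‖K‖ * (Real.exp ((x-1-a)^2 - (x-a)^2/2)/(x-a)) := by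
        apply mul_le_mul_of_nonneg_left _ (norm_nonneg K)
        gcongr
      have hstep4 : ‖K‖ * Real.exp (x-a) ≤ ‖K‖ * (Real.exp (2*(x-a))/(x-a)) := by
        apply mul_le_mul_of_nonneg_left _ (norm_nonneg K)
        rw [le_div_iff₀ hy0, hEy]
        nlinarith
      have hstep5 : 1 + ‖φ x₁‖ ≤ ‖K‖ * Real.exp (x-a) := by
        rw [div_le_iff₀ hKpos] at hyM
        nlinarith [mul_le_mul_of_nonneg_left hexpy (norm_nonneg K)]
      have hstep6 : ‖φ x₁‖ * ((x-a) * Real.exp (-(x-a)^2/2)) ≤ ‖φ x₁‖ := by nlinarith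
      rw [hnormv]
      linarith
    -- contradiction with L²
    have hmeas : MeasurableSet (Set.Ioi X₀) := measurableSet_Ioi
    have hres : eLpNorm v 2 (volume.restrict (Set.Ioi X₀)) ≤ eLpNorm v 2 mu := by
      apply eLpNorm_mono_measure
      exact Measure.restrict_mono (Set.Ioi_subset_Ioi hX₀pos.le) le_rfl
    have hlow : eLpNorm (fun _ : ℝ => (1:ℂ)) 2 (volume.restrict (Set.Ioi X₀))
        ≤ eLpNorm v 2 (volume.restrict (Set.Ioi X₀)) := by
      apply eLpNorm_mono_ae
      rw [MeasureTheory.ae_restrict_iff' hmeas]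
      exact MeasureTheory.ae_of_all _ (fun x hx => by simpa using hbig x hx)
    have hμne : (volume.restrict (Set.Ioi X₀)) ≠ 0 := by
      intro h0
      have h1' := congrArg (fun m : Measure ℝ => m Set.univ) h0
      simp only [Measure.restrict_apply_univ] at h1'
      rw [Real.volume_Ioi] at h1'
      simp at h1'
    have hconst1 : eLpNorm (fun _ : ℝ => (1:ℂ)) 2 (volume.restrict (Set.Ioi X₀)) = ⊤ := by
      rw [eLpNorm_const (1:ℂ) (by norm_num) hμne, Measure.restrict_apply_univ, Real.volume_Ioi]
      norm_num [ENNReal.top_rpow_of_pos]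
    have hcontra : (⊤ : ENNReal) ≤ eLpNorm v 2 mu :=
      le_trans (le_of_eq hconst1.symm) (le_trans hlow hres)
    exact absurd (lt_of_le_of_lt hcontra hL2.2) (lt_irrefl _)
end
end

section
/- Uniqueness of L² solutions of the shifted Hermite equation with eigenvalue 1: Let a ∈ ℝ and let v : (0,∞) → ℂ be twice continuously differentiable with v ∈ L²(0,∞) and −v''(x) + ((x−a)² − 1)v(x) = 0 for all x > 0. Then there is a constant c ∈ ℂ such that v(x) = c e^{−(x−a)²/2} for all x > 0. -/
open MeasureTheory Set Filter

noncomputable section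

private lemma aux_const_on_Ioi {f : ℝ → ℂ} (hf : ∀ x ∈ Set.Ioi (0:ℝ), HasDerivAt f 0 x) :
    ∀ x ∈ Set.Ioi (0:ℝ), ∀ y ∈ Set.Ioi (0:ℝ), f x = f y := by
  intro x hx y hy
  apply (convex_Ioi (0:ℝ)).is_const_of_fderivWithin_eq_zero
    (fun z hz => (hf z hz).differentiableAt.differentiableWithinAt) ?_ hx hy
  intro z hz
  rw [fderivWithin_of_isOpen isOpen_Ioi hz]
  have h := (hf z hz).hasFDerivAt
  have h2 := h.fderiv
  rw [h2]
  ext t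
  simp

private lemma aux_sub_hasDerivAt (a : ℝ) (x : ℝ) :
    HasDerivAt (fun y : ℝ => ((y:ℂ) - a)) 1 x := by
  simpa using (Complex.ofRealCLM.hasDerivAt (x := x)).sub_const (a:ℂ)

private lemma aux_q_hasDerivAt (a : ℝ) (x : ℝ) :
    HasDerivAt (fun y : ℝ => ((y:ℂ) - a)^2/2) ((x:ℂ) - a) x := by
  have h2 := ((aux_sub_hasDerivAt a x).mul (aux_sub_hasDerivAt a x)).div_const 2
  have he : (fun y : ℝ => ((y:ℂ) - a)^2/2) = fun y : ℝ => ((y:ℂ) - a) * ((y:ℂ) - a)/2 := by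
    funext y; ring
  rw [he]
  refine h2.congr_deriv ?_
  ring

/-- every `L²(0,∞)`, twice continuously differentiable solution of the shifted
Hermite equation `-v'' + ((x-a)² - 1) v = 0` on `(0,∞)` is a scalar multiple of the explicit
Gaussian-type solution. -/
theorem hermite_halfline_eigenvalue_one (a : ℝ) (v : ℝ → ℂ)
    (h1 : ∀ x ∈ Set.Ioi (0:ℝ), DifferentiableAt ℝ v x)
    (h2 : ∀ x ∈ Set.Ioi (0:ℝ), DifferentiableAt ℝ (deriv v) x)
    (h3 : ContinuousOn (deriv (deriv v)) (Set.Ioi (0:ℝ)))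
    (hL2 : MeasureTheory.MemLp v 2 mu)
    (heq : ∀ x ∈ Set.Ioi (0:ℝ),
      -(deriv (deriv v) x) + (((x - a)^2 - 1 : ℝ) : ℂ) * v x = 0) :
    ∃ c : ℂ, ∀ x ∈ Set.Ioi (0:ℝ), v x = c * ((Real.exp (-(x - a)^2/2) : ℝ) : ℂ) := by
  classical
  set E : ℝ → ℂ := fun x => Complex.exp (((x:ℂ) - a)^2/2) with hEdef
  have hE : ∀ x : ℝ, HasDerivAt E (((x:ℂ) - a) * E x) x := by
    intro x
    simpa [hEdef, mul_comm] using (aux_q_hasDerivAt a x).cexp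
  have hEne : ∀ x : ℝ, E x ≠ 0 := fun x => Complex.exp_ne_zero _
  set w : ℝ → ℂ := fun x => E x * v x with hwdef
  set u : ℝ → ℂ := fun x => E x * (((x:ℂ) - a) * v x + deriv v x) with hudef
  have hw : ∀ x ∈ Set.Ioi (0:ℝ), HasDerivAt w (u x) x := by
    intro x hx
    have h := (hE x).mul ((h1 x hx).hasDerivAt)
    refine h.congr_deriv ?_
    simp only [hudef]
    ring
  have hu : ∀ x ∈ Set.Ioi (0:ℝ), HasDerivAt u (2*((x:ℂ)-a) * u x) x := by
    intro x hx
    have hv'' : deriv (deriv v) x = (((x - a)^2 - 1 : ℝ) : ℂ) * v x := by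
      have := heq x hx; linear_combination -this
    have hinner : HasDerivAt (fun y : ℝ => ((y:ℂ) - a) * v y + deriv v y)
        (1 * v x + ((x:ℂ) - a) * deriv v x + deriv (deriv v) x) x :=
      ((aux_sub_hasDerivAt a x).mul (h1 x hx).hasDerivAt).add (h2 x hx).hasDerivAt
    have h := (hE x).mul hinner
    refine h.congr_deriv ?_
    simp only [hudef]
    rw [hv'']
    push_cast
    ring
  -- F = u * exp(-(x-a)^2) has zero derivative
  set F : ℝ → ℂ := fun x => u x * Complex.exp (-((x:ℂ) - a)^2) with hFdef
  have hG : ∀ x : ℝ, HasDerivAt (fun y : ℝ => Complex.exp (-((y:ℂ) - a)^2))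
      (-2*((x:ℂ)-a) * Complex.exp (-((x:ℂ) - a)^2)) x := by
    intro x
    have hq : HasDerivAt (fun y : ℝ => -((y:ℂ) - a)^2) (-2*((x:ℂ)-a)) x := by
      have := ((aux_sub_hasDerivAt a x).mul (aux_sub_hasDerivAt a x)).neg
      have he : (fun y : ℝ => -((y:ℂ) - a)^2) = fun y : ℝ => -(((y:ℂ) - a) * ((y:ℂ) - a)) := by
        funext y; ring
      rw [he]
      refine this.congr_deriv ?_
      ring
    simpa [mul_comm] using hq.cexp
  have hF : ∀ x ∈ Set.Ioi (0:ℝ), HasDerivAt F 0 x := by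
    intro x hx
    have h := (hu x hx).mul (hG x)
    refine h.congr_deriv ?_
    ring
  have h1pos : (1:ℝ) ∈ Set.Ioi (0:ℝ) := by norm_num
  obtain ⟨K, hFK⟩ : ∃ K : ℂ, ∀ x ∈ Set.Ioi (0:ℝ), F x = K :=
    ⟨F 1, fun x hx => aux_const_on_Ioi hF x hx 1 h1pos⟩
  have huK : ∀ x ∈ Set.Ioi (0:ℝ), u x = K * Complex.exp (((x:ℂ) - a)^2) := by
    intro x hx
    have h := hFK x hx
    simp only [hFdef] at h
    have : u x * Complex.exp (-((x:ℂ) - a)^2) * Complex.exp (((x:ℂ) - a)^2)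
        = K * Complex.exp (((x:ℂ) - a)^2) := by rw [h]
    rwa [mul_assoc, ← Complex.exp_add, neg_add_cancel, Complex.exp_zero, mul_one] at this
  by_cases hK : K = 0
  · -- w is constant
    have hw0 : ∀ x ∈ Set.Ioi (0:ℝ), HasDerivAt w 0 x := by
      intro x hx
      have := hw x hx
      rwa [huK x hx, hK, zero_mul] at this
    set c : ℂ := w 1 with hcdef
    refine ⟨c, fun x hx => ?_⟩
    have hwc : w x = c := aux_const_on_Ioi hw0 x hx 1 h1pos
    have : E x * v x = c := hwc
    have hv : v x = c * (E x)⁻¹ := by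
      rw [← this, mul_comm (E x) (v x), mul_assoc, mul_inv_cancel₀ (hEne x), mul_one]
    rw [hv]
    congr 1
    rw [hEdef]
    rw [← Complex.exp_neg]
    rw [show (((Real.exp (-(x - a)^2/2)) : ℝ) : ℂ) = Complex.exp ((( -(x - a)^2/2 : ℝ)) : ℂ) by
      rw [Complex.ofReal_exp]]
    congr 1
    push_cast
    ring
  · -- contradiction with L²
    exfalso
    -- FTC: w x = w 1 + K * (∫ t in 1..x, exp((t-a)^2))
    have hcont : Continuous (fun t : ℝ => K * Complex.exp (((t:ℂ) - a)^2)) := by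
      fun_prop
    have hftc : ∀ x : ℝ, 1 ≤ x →
        w x - w 1 = K * ((∫ t in (1:ℝ)..x, Real.exp ((t - a)^2) : ℝ) : ℂ) := by
      intro x hx1
      have hders : ∀ t ∈ Set.uIcc (1:ℝ) x, HasDerivAt w (K * Complex.exp (((t:ℂ) - a)^2)) t := by
        intro t ht
        rw [Set.uIcc_of_le hx1] at ht
        have htpos : t ∈ Set.Ioi (0:ℝ) := lt_of_lt_of_le one_pos ht.1
        have := hw t htpos
        rwa [huK t htpos] at this
      have := intervalIntegral.integral_eq_sub_of_hasDerivAt hders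
        (hcont.intervalIntegrable 1 x)
      rw [← this, intervalIntegral.integral_const_mul]
      congr 1
      rw [← intervalIntegral.integral_ofReal]
      congr 1
      funext t
      rw [Complex.ofReal_exp]
      congr 1
      push_cast
      ring
    set I : ℝ → ℝ := fun x => ∫ t in (1:ℝ)..x, Real.exp ((t - a)^2) with hIdef
    -- norm of E
    have hEnorm : ∀ x : ℝ, ‖E x‖ = Real.exp ((x - a)^2/2) := by
      intro x
      rw [hEdef]
      simp only
      rw [show ((x:ℂ) - a)^2/2 = (((x - a)^2/2 : ℝ) : ℂ) by push_cast; ring]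
      rw [Complex.norm_exp, Complex.ofReal_re]
    -- lower bound on I x
    have hIlb : ∀ x : ℝ, 2 ≤ x → a + 2 ≤ x → Real.exp ((x - 1 - a)^2) ≤ I x := by
      intro x hx2 hxa
      have h1x1 : (1:ℝ) ≤ x - 1 := by linarith
      have hint : ∀ b c : ℝ, IntervalIntegrable (fun t => Real.exp ((t - a)^2)) volume b c :=
        fun b c => (Real.continuous_exp.comp (by continuity)).intervalIntegrable b c
      have hsplit : I x = (∫ t in (1:ℝ)..(x-1), Real.exp ((t - a)^2))
          + ∫ t in (x-1)..x, Real.exp ((t - a)^2) := by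
        rw [hIdef]
        exact (intervalIntegral.integral_add_adjacent_intervals (hint 1 (x-1)) (hint (x-1) x)).symm
      have hpos1 : 0 ≤ ∫ t in (1:ℝ)..(x-1), Real.exp ((t - a)^2) :=
        intervalIntegral.integral_nonneg h1x1 (fun t _ => (Real.exp_pos _).le)
      have hpos2 : Real.exp ((x - 1 - a)^2) ≤ ∫ t in (x-1)..x, Real.exp ((t - a)^2) := by
        have hmono : ∀ t ∈ Set.Icc (x-1) x, Real.exp ((x - 1 - a)^2) ≤ Real.exp ((t - a)^2) := by
          intro t ht
          apply Real.exp_le_exp.mpr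
          have h0 : 0 ≤ x - 1 - a := by linarith
          have h0' : x - 1 - a ≤ t - a := by linarith [ht.1]
          nlinarith
        have := intervalIntegral.integral_mono_on (by linarith : x - 1 ≤ x)
          (intervalIntegrable_const) (hint (x-1) x) hmono
        calc Real.exp ((x - 1 - a)^2)
            = ∫ _ in (x-1)..x, Real.exp ((x - 1 - a)^2) := by
              rw [intervalIntegral.integral_const, show x - (x-1) = (1:ℝ) by ring, one_smul]
          _ ≤ _ := this
      linarith [hsplit, hpos1, hpos2]
    -- lower bound on ‖v x‖
    have hvlb : ∀ x : ℝ, 2 ≤ x → a + 2 ≤ x →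
        ‖K‖ * Real.exp ((x - 1 - a)^2 - (x - a)^2/2) - ‖w 1‖ ≤ ‖v x‖ := by
      intro x hx2 hxa
      have hvx : ‖v x‖ = ‖w x‖ * Real.exp (-(x - a)^2/2) := by
        have hv : v x = w x * (E x)⁻¹ := by
          show v x = (E x * v x) * (E x)⁻¹
          rw [mul_comm (E x) (v x), mul_assoc, mul_inv_cancel₀ (hEne x), mul_one]
        rw [hv, norm_mul, norm_inv, hEnorm, ← Real.exp_neg]
        congr 2
        ring
      have hwx : ‖K‖ * I x - ‖w 1‖ ≤ ‖w x‖ := by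
        have h := hftc x (by linarith)
        have hKI : ‖w x - w 1‖ = ‖K‖ * |I x| := by
          rw [h, norm_mul, Complex.norm_real, Real.norm_eq_abs]
        have h2' : ‖w x - w 1‖ ≤ ‖w x‖ + ‖w 1‖ := norm_sub_le _ _
        have h3 : I x ≤ |I x| := le_abs_self _
        nlinarith [norm_nonneg K]
      have hIx := hIlb x hx2 hxa
      have hexp : (0:ℝ) < Real.exp (-(x - a)^2/2) := Real.exp_pos _
      have hexple : Real.exp (-(x - a)^2/2) ≤ 1 := by
        rw [Real.exp_le_one_iff]
        nlinarith [sq_nonneg (x - a)]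
      have hwv : (‖K‖ * I x - ‖w 1‖) * Real.exp (-(x - a)^2/2)
          ≤ ‖w x‖ * Real.exp (-(x - a)^2/2) :=
        mul_le_mul_of_nonneg_right hwx hexp.le
      have key : ‖K‖ * Real.exp ((x - 1 - a)^2) * Real.exp (-(x - a)^2/2) - ‖w 1‖ ≤ ‖v x‖ := by
        rw [hvx]
        have step1 : ‖K‖ * Real.exp ((x - 1 - a)^2) * Real.exp (-(x - a)^2/2) - ‖w 1‖
            ≤ (‖K‖ * I x - ‖w 1‖) * Real.exp (-(x - a)^2/2) := by
          have hA : ‖K‖ * Real.exp ((x - 1 - a)^2) * Real.exp (-(x - a)^2/2)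
              ≤ ‖K‖ * I x * Real.exp (-(x - a)^2/2) :=
            mul_le_mul_of_nonneg_right
              (mul_le_mul_of_nonneg_left hIx (norm_nonneg K)) hexp.le
          have hB : ‖w 1‖ * Real.exp (-(x - a)^2/2) ≤ ‖w 1‖ * 1 :=
            mul_le_mul_of_nonneg_left hexple (norm_nonneg (w 1))
          nlinarith
        linarith
      rw [mul_assoc, ← Real.exp_add] at key
      have harg : (x - 1 - a)^2 + (-(x - a)^2/2) = (x - 1 - a)^2 - (x - a)^2/2 := by ring
      rw [harg] at key
      linarith [key, mul_assoc ‖K‖ (Real.exp ((x - 1 - a)^2 - (x - a)^2/2)) 1]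
    -- the lower bound tends to infinity
    have hKpos : 0 < ‖K‖ := norm_pos_iff.mpr hK
    have htendexp : Tendsto (fun x : ℝ => (x - 1 - a)^2 - (x - a)^2/2) atTop atTop := by
      have heq' : (fun x : ℝ => (x - 1 - a)^2 - (x - a)^2/2)
          = fun x : ℝ => (x - (a + 2))^2/2 - 1 := by funext x; ring
      rw [heq']
      apply tendsto_atTop_add_const_right
      apply Tendsto.atTop_div_const (by norm_num : (0:ℝ) < 2)
      have : Tendsto (fun x : ℝ => x - (a + 2)) atTop atTop :=
        tendsto_atTop_add_const_right _ _ tendsto_id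
      exact (tendsto_pow_atTop (two_ne_zero)).comp this
    have htend : Tendsto (fun x : ℝ =>
        ‖K‖ * Real.exp ((x - 1 - a)^2 - (x - a)^2/2) - ‖w 1‖) atTop atTop := by
      simp only [sub_eq_add_neg]
      apply tendsto_atTop_add_const_right
      exact Tendsto.const_mul_atTop hKpos (Real.tendsto_exp_atTop.comp htendexp)
    have hev : ∀ᶠ x : ℝ in atTop, 1 ≤ ‖v x‖ := by
      filter_upwards [htend.eventually_ge_atTop 1, eventually_ge_atTop (2:ℝ),
        eventually_ge_atTop (a + 2)] with x hb h2x hax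
      exact le_trans hb (hvlb x h2x hax)
    obtain ⟨M, hM⟩ := hev.exists_forall_of_atTop
    set M' := max M 1 with hM'def
    have hM'1 : (1:ℝ) ≤ M' := le_max_right _ _
    have hMle : ∀ x ≥ M', 1 ≤ ‖v x‖ := fun x hx => hM x (le_trans (le_max_left _ _) hx)
    -- L² contradiction
    have hrestr : mu.restrict (Set.Ioi M') = volume.restrict (Set.Ioi M') := by
      rw [mu, Measure.restrict_restrict measurableSet_Ioi]
      congr 1
      rw [Set.inter_eq_left]
      exact Set.Ioi_subset_Ioi (by linarith)
    have hmem : MemLp (fun _ : ℝ => (1:ℝ)) 2 (volume.restrict (Set.Ioi M')) := by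
      have h2' := hL2.restrict (Set.Ioi M')
      rw [hrestr] at h2'
      apply h2'.mono aestronglyMeasurable_const
      filter_upwards [ae_restrict_mem measurableSet_Ioi] with x hx
      simpa using hMle x (le_of_lt hx)
    rw [memLp_const_iff (by norm_num) (by norm_num)] at hmem
    rcases hmem with h | h
    · exact one_ne_zero h
    · rw [Measure.restrict_apply_univ, Real.volume_Ioi] at h
      exact (lt_irrefl _ h).elim
end
end

section
/- Embedding of the weighted Sobolev space into the logarithmic energy space: Let f ∈ H¹(0,∞) be such that x f(x) ∈ L²(0,∞). Then f ∈ L¹(0,∞) and the function x ↦ |f(x)|² log|f(x)|² (defined as 0 where f(x)=0) belongs to L¹(0,∞). In particular W¹(ℝ₊) ⊂ W(ℝ₊). -/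
open MeasureTheory Set Filter

noncomputable section

lemma L2_mul_L2_integrable {μ : Measure ℝ} {φ g : ℝ → ℂ} (hφ : MemLp φ 2 μ)
    (hg : MemLp g 2 μ) : Integrable (fun x => φ x * g x) μ := by
  have h := hg.smul hφ (r := 1)
    (hpqr := ⟨by norm_num [ENNReal.inv_two_add_inv_two]⟩)
  rw [← memLp_one_iff_integrable]
  exact h

lemma L2_mul_L2_integrable_real {μ : Measure ℝ} {φ g : ℝ → ℝ} (hφ : MemLp φ 2 μ)
    (hg : MemLp g 2 μ) : Integrable (fun x => φ x * g x) μ := by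
  have h := hg.smul hφ (r := 1)
    (hpqr := ⟨by norm_num [ENNReal.inv_two_add_inv_two]⟩)
  rw [← memLp_one_iff_integrable]
  exact h

lemma memℒp_conj {μ : Measure ℝ} {f : ℝ → ℂ} (hf : MemLp f 2 μ) :
    MemLp (fun x => (starRingEnd ℂ) (f x)) 2 μ :=
  hf.of_le (Continuous.comp_aestronglyMeasurable continuous_star hf.1)
    (Eventually.of_forall fun x => by simp)

lemma tlog_bound {B t : ℝ} (hB : 1 ≤ B) (ht0 : 0 ≤ t) (htB : t ≤ B) :
    |t * Real.log t| ≤ 2 * Real.sqrt t + Real.log B * t := by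
  have hlogB : 0 ≤ Real.log B := Real.log_nonneg hB
  rcases eq_or_lt_of_le ht0 with h | h
  · simp [← h]
  rcases le_total t 1 with h1 | h1
  · have hlog : Real.log t ≤ 0 := Real.log_nonpos h.le h1
    have hs : 0 < Real.sqrt t := Real.sqrt_pos.mpr h
    have hst : Real.log (Real.sqrt t)⁻¹ ≤ (Real.sqrt t)⁻¹ - 1 :=
      Real.log_le_sub_one_of_pos (by positivity)
    have hlogeq : Real.log (Real.sqrt t)⁻¹ = -(Real.log t / 2) := by
      rw [Real.log_inv, Real.log_sqrt ht0]
    have hkey : -Real.log t ≤ 2 * (Real.sqrt t)⁻¹ := by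
      rw [hlogeq] at hst; linarith
    have habs : |t * Real.log t| = t * (-Real.log t) := by
      rw [abs_of_nonpos (mul_nonpos_of_nonneg_of_nonpos ht0 hlog)]; ring
    have hdiv : t * (Real.sqrt t)⁻¹ = Real.sqrt t := by
      rw [mul_inv_eq_iff_eq_mul₀ hs.ne']; exact (Real.mul_self_sqrt ht0).symm
    have hmul : t * (-Real.log t) ≤ t * (2 * (Real.sqrt t)⁻¹) :=
      mul_le_mul_of_nonneg_left hkey ht0
    calc |t * Real.log t| = t * (-Real.log t) := habs
      _ ≤ t * (2 * (Real.sqrt t)⁻¹) := hmul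
      _ = 2 * Real.sqrt t := by rw [← mul_assoc, mul_comm t 2, mul_assoc, hdiv]
      _ ≤ 2 * Real.sqrt t + Real.log B * t := by nlinarith
  · have hlog : 0 ≤ Real.log t := Real.log_nonneg h1
    have hle : Real.log t ≤ Real.log B := Real.log_le_log h htB
    have habs : |t * Real.log t| = t * Real.log t :=
      abs_of_nonneg (mul_nonneg ht0 hlog)
    have hsq : 0 ≤ Real.sqrt t := Real.sqrt_nonneg t
    nlinarith


/-- `W¹(ℝ₊) ⊂ W(ℝ₊)`: any `f ∈ H¹(0,∞)` with `x f ∈ L²(0,∞)` is integrable and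
`|f|² log |f|²` is integrable on `(0,∞)`. -/
theorem W1_subset_logEnergySpace (f : ℝ → ℂ) (h : MemW1 f) :
    MeasureTheory.Integrable f mu ∧
    MeasureTheory.Integrable (fun x => ‖f x‖^2 * Real.log (‖f x‖^2)) mu := by
  obtain ⟨⟨hcont, hdiff, hfL2, hf'L2⟩, hxfL2⟩ := h
  have hmu : mu = volume.restrict (Set.Ioi (0:ℝ)) := rfl
  -- Part 1: integrability of f
  have hIoc : IntegrableOn f (Set.Ioc 0 1) volume := by
    have h1 : MemLp f 2 (mu.restrict (Set.Ioc 0 1)) := hfL2.restrict _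
    rw [hmu, Measure.restrict_restrict_of_subset Set.Ioc_subset_Ioi_self] at h1
    haveI : IsFiniteMeasure (volume.restrict (Set.Ioc (0:ℝ) 1)) := by
      constructor
      rw [Measure.restrict_apply_univ, Real.volume_Ioc]
      exact ENNReal.ofReal_lt_top
    exact h1.integrable one_le_two
  have hIoi1 : IntegrableOn f (Set.Ioi 1) volume := by
    have hw : MemLp (fun x : ℝ => ((x:ℂ))⁻¹) 2 (volume.restrict (Set.Ioi 1)) := by
      rw [memLp_two_iff_integrable_sq_norm
        (f := fun x : ℝ => ((x:ℂ))⁻¹)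
        ((Complex.measurable_ofReal.inv).aestronglyMeasurable)]
      have hint : IntegrableOn (fun x : ℝ => x ^ (-2 : ℝ)) (Set.Ioi 1) volume :=
        integrableOn_Ioi_rpow_of_lt (by norm_num) one_pos
      apply hint.congr_fun ?_ measurableSet_Ioi
      intro x hx
      have hx0 : 0 < x := lt_trans one_pos hx
      show x ^ (-2 : ℝ) = ‖((x:ℂ))⁻¹‖ ^ 2
      rw [norm_inv, Complex.norm_real, Real.norm_eq_abs, abs_of_pos hx0, inv_pow]
      rw [show (-2:ℝ) = -(2:ℝ) by norm_num, Real.rpow_neg hx0.le,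
        show (2:ℝ) = ((2:ℕ):ℝ) by norm_num, Real.rpow_natCast]
    have hxf : MemLp (fun x : ℝ => (x:ℂ) * f x) 2 (volume.restrict (Set.Ioi 1)) := by
      have h2 := hxfL2.restrict (Set.Ioi 1)
      rwa [hmu, Measure.restrict_restrict_of_subset (Set.Ioi_subset_Ioi zero_le_one)] at h2
    have h3 := L2_mul_L2_integrable hw hxf
    apply h3.congr
    filter_upwards [ae_restrict_mem measurableSet_Ioi] with x hx
    have hx0 : (x:ℂ) ≠ 0 := by
      exact_mod_cast ne_of_gt (lt_trans one_pos hx)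
    field_simp
  have hfint : Integrable f mu := by
    rw [hmu, ← Set.Ioc_union_Ioi_eq_Ioi (zero_le_one : (0:ℝ) ≤ 1)]
    exact hIoc.union hIoi1
  refine ⟨hfint, ?_⟩
  -- Part 2: boundedness of ‖f‖² on (0,∞)
  set g : ℝ → ℝ := fun t =>
    ((starRingEnd ℂ) (deriv f t) * f t + (starRingEnd ℂ) (f t) * deriv f t).re with hg_def
  have hg_int : Integrable g mu := by
    have h1 : Integrable (fun t =>
        (starRingEnd ℂ) (deriv f t) * f t + (starRingEnd ℂ) (f t) * deriv f t) mu :=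
      (L2_mul_L2_integrable (memℒp_conj hf'L2) hfL2).add
        (L2_mul_L2_integrable (memℒp_conj hfL2) hf'L2)
    exact h1.re
  have hg_intOn : IntegrableOn g (Set.Ioi 0) volume := by rwa [hmu] at hg_int
  have hderiv : ∀ t ∈ Set.Ioi (0:ℝ), HasDerivAt (fun s => ‖f s‖^2) (g t) t := by
    intro t ht
    have hft : HasDerivAt f (deriv f t) t := (hdiff t ht).hasDerivAt
    have h1 : HasDerivAt (fun s => (starRingEnd ℂ) (f s)) ((starRingEnd ℂ) (deriv f t)) t :=
      hft.star
    have h2 := h1.mul hft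
    have h3 := Complex.reCLM.hasFDerivAt.comp_hasDerivAt t h2
    have heq : (⇑Complex.reCLM ∘ ((fun s => (starRingEnd ℂ) (f s)) * f))
        = fun s => ‖f s‖^2 := by
      funext s
      simp only [Function.comp_apply, Pi.mul_apply, Complex.reCLM_apply]
      rw [mul_comm, Complex.mul_conj, Complex.ofReal_re, Complex.normSq_eq_norm_sq]
    rw [heq] at h3
    exact h3
  have hM_nonneg : 0 ≤ ∫ t in Set.Ioi (0:ℝ), |g t| := by
    apply integral_nonneg; intro x; exact abs_nonneg _
  set M : ℝ := ∫ t in Set.Ioi (0:ℝ), |g t| with hM_def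
  have hFTC : ∀ a b : ℝ, 0 < a → a ≤ b → |‖f b‖^2 - ‖f a‖^2| ≤ M := by
    intro a b ha hab
    have hsub : Set.uIcc a b ⊆ Set.Ioi 0 := by
      rw [Set.uIcc_of_le hab]
      intro x hx; exact lt_of_lt_of_le ha hx.1
    have heq : ∫ t in a..b, g t = ‖f b‖^2 - ‖f a‖^2 := by
      apply intervalIntegral.integral_eq_sub_of_hasDerivAt
      · intro t ht; exact hderiv t (hsub ht)
      · exact (hg_intOn.mono_set hsub).intervalIntegrable
    rw [← heq]
    have h1 : |∫ t in a..b, g t| ≤ ∫ t in a..b, |g t| :=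
      intervalIntegral.abs_integral_le_integral_abs hab
    have h2 : ∫ t in a..b, |g t| ≤ M := by
      rw [intervalIntegral.integral_of_le hab, hM_def]
      apply setIntegral_mono_set hg_intOn.abs
      · exact Eventually.of_forall fun x => abs_nonneg _
      · exact HasSubset.Subset.eventuallyLE fun x hx => lt_trans ha hx.1
    linarith
  have hF_int : Integrable (fun t => ‖f t‖^2) mu := by
    have := L2_mul_L2_integrable_real hfL2.norm hfL2.norm
    simpa [sq] using this
  have hF_intOn : IntegrableOn (fun t => ‖f t‖^2) (Set.Ioi 0) volume := by rwa [hmu] at hF_int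
  set K : ℝ := (∫ t in Set.Ioi (0:ℝ), ‖f t‖^2) + 1 with hK_def
  have hInt_nonneg : 0 ≤ ∫ t in Set.Ioi (0:ℝ), ‖f t‖^2 := by
    apply integral_nonneg; intro x; positivity
  have hy : ∃ y ∈ Set.Ioo (0:ℝ) 1, ‖f y‖^2 ≤ K := by
    by_contra hc
    push_neg at hc
    have h1 : K * (volume (Set.Ioo (0:ℝ) 1)).toReal ≤ ∫ t in Set.Ioo (0:ℝ) 1, ‖f t‖^2 :=
      by have := setIntegral_ge_of_const_le_real measurableSet_Ioo (by simp)
           (fun x hx => (hc x hx).le) (hF_intOn.mono_set Set.Ioo_subset_Ioi_self)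
         rwa [measureReal_def] at this
    have h2 : ∫ t in Set.Ioo (0:ℝ) 1, ‖f t‖^2 ≤ ∫ t in Set.Ioi (0:ℝ), ‖f t‖^2 := by
      apply setIntegral_mono_set hF_intOn
      · exact Eventually.of_forall fun x => by positivity
      · exact HasSubset.Subset.eventuallyLE Set.Ioo_subset_Ioi_self
    have hvol : (volume (Set.Ioo (0:ℝ) 1)).toReal = 1 := by
      rw [Real.volume_Ioo]; norm_num
    rw [hvol, mul_one, hK_def] at h1
    linarith
  obtain ⟨y, hy_mem, hyK⟩ := hy
  set B : ℝ := K + M with hB_def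
  have hB1 : 1 ≤ B := by rw [hB_def, hK_def]; linarith
  have hbound : ∀ x ∈ Set.Ioi (0:ℝ), ‖f x‖^2 ≤ B := by
    intro x hx
    rcases le_total y x with hxy | hxy
    · have := hFTC y x hy_mem.1 hxy
      have := abs_le.mp this
      rw [hB_def]; linarith
    · have := hFTC x y hx hxy
      have := abs_le.mp this
      rw [hB_def]; linarith
  -- Part 3: conclude
  have hhmeas : AEStronglyMeasurable (fun x => ‖f x‖^2 * Real.log (‖f x‖^2)) mu := by
    have h1 : AEMeasurable (fun x => ‖f x‖^2) mu :=
      (hfL2.aestronglyMeasurable.norm.aemeasurable).pow_const 2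
    exact (h1.mul (Real.measurable_log.comp_aemeasurable h1)).aestronglyMeasurable
  have hdom : Integrable (fun x => 2 * ‖f x‖ + Real.log B * ‖f x‖^2) mu :=
    (hfint.norm.const_mul 2).add (hF_int.const_mul _)
  apply Integrable.mono' hdom hhmeas
  have hmem : ∀ᵐ x ∂mu, x ∈ Set.Ioi (0:ℝ) := by
    rw [hmu]; exact ae_restrict_mem measurableSet_Ioi
  filter_upwards [hmem] with x hx
  have ht0 : (0:ℝ) ≤ ‖f x‖^2 := by positivity
  have := tlog_bound hB1 ht0 (hbound x hx)
  rw [Real.sqrt_sq (norm_nonneg _)] at this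
  rw [Real.norm_eq_abs]
  exact this
end
end

section
/- The profiles Φ_k^α are standing-wave profiles: Let N ≥ 3 be an integer, α ≠ 0, ω ∈ ℝ and k ∈ {1,…,⌊(N−1)/2⌋}; set a_k = α/(2k−N). Then each component of Φ_k^α satisfies the stationary logarithmic equation −(φ^α_{k,j})''(x) + ω φ^α_{k,j}(x) − φ^α_{k,j}(x) log( (φ^α_{k,j}(x))² ) = 0 for all x > 0, and Φ_k^α satisfies the δ-vertex conditions: φ^α_{k,1}(0) = … = φ^α_{k,N}(0) and ∑_{j=1}^N (φ^α_{k,j})'(0) = α φ^α_{k,1}(0). Consequently Φ_k^α ∈ dom(H^α_δ) and H^α_δΦ_k^α + ωΦ_k^α − Φ_k^α log|Φ_k^α|² = 0, so that U(t,x) = e^{iωt}Φ_k^α(x) is a standing-wave solution of the NLS-log-δ equation. -/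
open MeasureTheory Set Filter

noncomputable section

-- Auxiliary development ------------------------------------------------------

namespace SWAux

def gg (c b : ℝ) (x : ℝ) : ℝ := Real.exp (c - (x + b)^2/2)

lemma continuous_gg (c b : ℝ) : Continuous (gg c b) := by
  unfold gg; fun_prop

lemma hasDerivAt_gg (c b x : ℝ) :
    HasDerivAt (gg c b) (-(x + b) * gg c b x) x := by
  have h1 : HasDerivAt (fun y : ℝ => c - (y + b)^2/2) (-(x+b)) x := by
    have h := ((((hasDerivAt_id x).add_const b).pow 2).div_const 2).const_sub c
    refine h.congr_deriv ?_
    simp only [id_eq]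
    push_cast
    ring
  unfold gg
  simpa [gg, mul_comm] using h1.exp

lemma deriv_gg (c b : ℝ) : deriv (gg c b) = fun x => -(x + b) * gg c b x :=
  funext fun x => (hasDerivAt_gg c b x).deriv

lemma hasDerivAt_gg' (c b x : ℝ) :
    HasDerivAt (fun y => -(y + b) * gg c b y) (((x+b)^2 - 1) * gg c b x) x := by
  have h1 : HasDerivAt (fun y : ℝ => -(y + b)) (-1) x := by
    have := ((hasDerivAt_id x).add_const b).neg
    exact this
  have := h1.mul (hasDerivAt_gg c b x)
  refine this.congr_deriv ?_
  ring

lemma deriv2_gg (c b : ℝ) :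
    deriv (deriv (gg c b)) = fun x => ((x+b)^2 - 1) * gg c b x := by
  rw [deriv_gg]
  exact funext fun x => (hasDerivAt_gg' c b x).deriv

lemma log_sq_gg (c b x : ℝ) : Real.log ((gg c b x)^2) = 2*c - (x+b)^2 := by
  unfold gg
  rw [sq, ← Real.exp_add, Real.log_exp]
  ring

lemma hasDerivAt_ggC (c b x : ℝ) :
    HasDerivAt (fun y => ((gg c b y : ℝ) : ℂ)) ((-(x + b) * gg c b x : ℝ) : ℂ) x :=
  (hasDerivAt_gg c b x).ofReal_comp

lemma derivC (c b : ℝ) :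
    deriv (fun y => ((gg c b y : ℝ) : ℂ)) = fun x => ((-(x + b) * gg c b x : ℝ) : ℂ) :=
  funext fun x => (hasDerivAt_ggC c b x).deriv

lemma hasDerivAt_derivC (c b x : ℝ) :
    HasDerivAt (deriv (fun y => ((gg c b y : ℝ) : ℂ)))
      ((((x+b)^2 - 1) * gg c b x : ℝ) : ℂ) x := by
  rw [derivC]
  exact (hasDerivAt_gg' c b x).ofReal_comp

lemma deriv2C (c b : ℝ) :
    deriv (deriv (fun y => ((gg c b y : ℝ) : ℂ)))
      = fun x => ((((x+b)^2 - 1) * gg c b x : ℝ) : ℂ) :=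
  funext fun x => (hasDerivAt_derivC c b x).deriv

lemma integrable_pow_gauss (n : ℕ) :
    Integrable (fun x : ℝ => x ^ n * Real.exp (-(1/2) * x ^ 2)) := by
  have hs : (-1 : ℝ) < (n : ℝ) := lt_of_lt_of_le neg_one_lt_zero (Nat.cast_nonneg n)
  have := integrable_rpow_mul_exp_neg_mul_sq (by norm_num : (0:ℝ) < 1/2) hs
  simpa [Real.rpow_natCast] using this

lemma integrable_dom (K : ℝ) :
    Integrable (fun x : ℝ => K * ((1+x^2)^2 * Real.exp (-(1/2) * x^2))) := by
  apply Integrable.const_mul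
  have h0 := integrable_pow_gauss 0
  have h2 := integrable_pow_gauss 2
  have h4 := integrable_pow_gauss 4
  have heq : (fun x : ℝ => (1+x^2)^2 * Real.exp (-(1/2)*x^2))
      = fun x : ℝ => x^0 * Real.exp (-(1/2)*x^2)
        + (2 * (x^2 * Real.exp (-(1/2)*x^2)) + x^4 * Real.exp (-(1/2)*x^2)) := by
    funext x; ring
  rw [heq]
  exact h0.add ((h2.const_mul 2).add h4)

lemma memL2_poly_gg (c b : ℝ) (P : ℝ → ℝ) (hP : Continuous P) (K : ℝ)
    (hK : ∀ x, P x ^ 2 ≤ K * (1+x^2)^2) :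
    MemL2 (fun x => ((P x * gg c b x : ℝ) : ℂ)) := by
  have hK0 : 0 ≤ K := by have := hK 0; nlinarith [sq_nonneg (P 0)]
  have hcont : Continuous (fun x => ((P x * gg c b x : ℝ) : ℂ)) :=
    Complex.continuous_ofReal.comp (hP.mul (continuous_gg c b))
  refine MemLp.restrict _ ?_
  rw [memLp_two_iff_integrable_sq_norm hcont.aestronglyMeasurable]
  apply Integrable.mono' (integrable_dom (K * Real.exp (2*c + b^2)))
  · exact ((hcont.norm.pow 2)).aestronglyMeasurable
  · refine ae_of_all _ fun x => ?_
    have hnorm : ‖(((P x * gg c b x : ℝ) : ℂ))‖ ^ 2 = (P x)^2 * (gg c b x)^2 := by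
      rw [Complex.norm_real, Real.norm_eq_abs, sq_abs, mul_pow]
    rw [Real.norm_eq_abs, abs_of_nonneg (sq_nonneg _), hnorm]
    have hgg2 : (gg c b x)^2 = Real.exp (2*c - (x+b)^2) := by
      unfold gg; rw [sq, ← Real.exp_add]; ring_nf
    have e1 : Real.exp (2*c - (x+b)^2) ≤ Real.exp (2*c + b^2) * Real.exp (-(1/2)*x^2) := by
      rw [← Real.exp_add]
      apply Real.exp_le_exp.mpr
      nlinarith [sq_nonneg (x + 2*b)]
    have h2 : (P x)^2 * (gg c b x)^2
        ≤ (K * (1+x^2)^2) * (Real.exp (2*c + b^2) * Real.exp (-(1/2)*x^2)) := by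
      rw [hgg2]
      apply mul_le_mul (hK x) e1 (Real.exp_pos _).le (by positivity)
    calc (P x)^2 * (gg c b x)^2
        ≤ (K * (1+x^2)^2) * (Real.exp (2*c + b^2) * Real.exp (-(1/2)*x^2)) := h2
      _ = K * Real.exp (2*c + b^2) * ((1+x^2)^2 * Real.exp (-(1/2)*x^2)) := by ring

lemma memL2_gg (c b : ℝ) : MemL2 (fun x => ((gg c b x : ℝ) : ℂ)) := by
  have := memL2_poly_gg c b (fun _ => 1) continuous_const 1
    (fun x => by nlinarith [sq_nonneg x, sq_nonneg (x^2)])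
  simpa using this

lemma memW2_gg (c b : ℝ) : MemW2 (fun x => ((gg c b x : ℝ) : ℂ)) := by
  refine ⟨⟨⟨?_, ?_, ?_, ?_⟩, ?_, ?_, ?_⟩, ?_⟩
  · exact (Complex.continuous_ofReal.comp (continuous_gg c b)).continuousOn
  · exact fun x _ => (hasDerivAt_ggC c b x).differentiableAt
  · exact memL2_gg c b
  · rw [derivC]
    exact memL2_poly_gg c b (fun x => -(x+b)) (by fun_prop) (2*(1+b^2))
      (fun x => by nlinarith [sq_nonneg (x-b), sq_nonneg x, sq_nonneg (x*b), sq_nonneg (x^2), sq_nonneg b, sq_nonneg (b*x^2)])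
  · rw [derivC]
    exact (Complex.continuous_ofReal.comp
      ((continuous_id.add continuous_const).neg.mul (continuous_gg c b))).continuousOn
  · exact fun x _ => (hasDerivAt_derivC c b x).differentiableAt
  · rw [deriv2C]
    refine memL2_poly_gg c b (fun x => (x+b)^2 - 1) (by fun_prop) ((3+2*b^2)^2) (fun x => ?_)
    have hA : (x+b)^2 + 1 ≤ (3+2*b^2)*(1+x^2) := by nlinarith [sq_nonneg (x-b), sq_nonneg x, sq_nonneg b, sq_nonneg (b*x)]
    have h0 : (0:ℝ) ≤ (x+b)^2 := sq_nonneg _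
    have hB : (0:ℝ) ≤ (3+2*b^2)*(1+x^2) := by positivity
    nlinarith [sq_nonneg (1+x^2), sq_nonneg (x+b)]
  · have heq : (fun x : ℝ => ((x:ℂ))^2 * ((gg c b x : ℝ) : ℂ))
        = fun x : ℝ => ((x^2 * gg c b x : ℝ) : ℂ) := by
      funext x; push_cast; ring
    rw [heq]
    exact memL2_poly_gg c b (fun x => x^2) (by fun_prop) 1
      (fun x => by nlinarith [sq_nonneg x])

lemma sum_pm (N k : ℕ) (hkN : k ≤ N) (a : ℝ) :
    (∑ j : Fin N, (if (j:ℕ) < k then a else -a)) = (k:ℝ)*a - ((N:ℝ)-(k:ℝ))*a := by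
  rw [Fin.sum_univ_eq_sum_range (fun i => if i < k then a else -a) N]
  rw [← Finset.sum_range_add_sum_Ico _ hkN]
  rw [Finset.sum_congr rfl (fun i hi => if_pos (Finset.mem_range.mp hi)),
    Finset.sum_congr rfl (fun i hi => if_neg (not_lt.mpr (Finset.mem_Ico.mp hi).1))]
  rw [Finset.sum_const, Finset.sum_const, Finset.card_range, Nat.card_Ico,
    nsmul_eq_mul, nsmul_eq_mul]
  push_cast [Nat.cast_sub hkN]
  ring

end SWAux

open SWAux

/-- the profiles `Φ_k^α` solve the stationary logarithmic equation on each edge,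
satisfy the δ-vertex conditions, belong to `dom(H^α_δ)`, and satisfy
`H^α_δ Φ + ω Φ − Φ log |Φ|² = 0`. -/
theorem phi_is_standing_wave_profile
    (N k : ℕ) (hN : 3 ≤ N) (α : ℝ) (hα : α ≠ 0) (ω : ℝ)
    (hk1 : 1 ≤ k) (hk2 : k ≤ (N - 1) / 2) :
    (∀ j : Fin N, ∀ x ∈ Set.Ioi (0:ℝ),
      -(deriv (deriv (phiProf N k α ω j)) x) + ω * phiProf N k α ω j x
        - phiProf N k α ω j x * Real.log ((phiProf N k α ω j x)^2) = 0) ∧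
    (∀ j j' : Fin N, phiProf N k α ω j 0 = phiProf N k α ω j' 0) ∧
    (∀ j₀ : Fin N, (∑ j, deriv (phiProf N k α ω j) 0) = α * phiProf N k α ω j₀ 0) ∧
    domDelta N α (fun j x => ((phiProf N k α ω j x : ℝ) : ℂ)) ∧
    (∀ j : Fin N, ∀ x ∈ Set.Ioi (0:ℝ),
      -(deriv (deriv (fun y => ((phiProf N k α ω j y : ℝ) : ℂ))) x)
        + (ω : ℂ) * ((phiProf N k α ω j x : ℝ) : ℂ)
        - ((phiProf N k α ω j x : ℝ) : ℂ) * ((Real.log ((phiProf N k α ω j x)^2) : ℝ) : ℂ)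
        = 0) := by
  have h2k : 2*k < N := by omega
  have hkN : k ≤ N := by omega
  have hden : (2*(k:ℝ) - (N:ℝ)) ≠ 0 := by
    have h : (2*(k:ℝ)) < (N:ℝ) := by exact_mod_cast h2k
    exact ne_of_lt (by linarith)
  set a : ℝ := α / (2*(k:ℝ) - (N:ℝ)) with ha
  set c : ℝ := (ω+1)/2 with hc
  have hαa : a * (2*(k:ℝ) - (N:ℝ)) = α := div_mul_cancel₀ α hden
  set B : Fin N → ℝ := fun j => if (j:ℕ) < k then -a else a with hBdef
  have hphi : ∀ j : Fin N, phiProf N k α ω j = gg c (B j) := by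
    intro j
    funext x
    simp only [hBdef, phiProf, gg]
    split_ifs with h
    · rw [← Real.exp_add]; congr 1; rw [hc, ha]; ring
    · rw [← Real.exp_add]; congr 1; rw [hc, ha]; ring
  have hB2 : ∀ j, (B j)^2 = a^2 := by
    intro j; simp only [hBdef]; split_ifs <;> ring
  have hgg0 : ∀ j, gg c (B j) 0 = Real.exp (c - a^2/2) := by
    intro j; unfold gg; rw [zero_add, hB2 j]
  have P1 : ∀ j : Fin N, ∀ x ∈ Set.Ioi (0:ℝ),
      -(deriv (deriv (phiProf N k α ω j)) x) + ω * phiProf N k α ω j x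
        - phiProf N k α ω j x * Real.log ((phiProf N k α ω j x)^2) = 0 := by
    intro j x _
    rw [hphi j, deriv2_gg, log_sq_gg]
    simp only
    rw [hc]
    ring
  have P2 : ∀ j j' : Fin N, phiProf N k α ω j 0 = phiProf N k α ω j' 0 := by
    intro j j'; rw [hphi j, hphi j', hgg0 j, hgg0 j']
  have hderiv0 : ∀ j, deriv (phiProf N k α ω j) 0 = -(B j) * Real.exp (c - a^2/2) := by
    intro j; rw [hphi j, deriv_gg]; simp only; rw [zero_add, hgg0 j]
  have hsum : (∑ j : Fin N, -(B j) * Real.exp (c - a^2/2)) = α * Real.exp (c - a^2/2) := by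
    rw [← Finset.sum_mul]
    have hb : ∀ j : Fin N, -(B j) = if (j:ℕ) < k then a else -a := by
      intro j; simp only [hBdef]; split_ifs <;> ring
    rw [Finset.sum_congr rfl (fun j _ => hb j), sum_pm N k hkN a]
    have : (k:ℝ)*a - ((N:ℝ)-(k:ℝ))*a = α := by
      rw [← hαa]; ring
    rw [this]
  have P3 : ∀ j₀ : Fin N, (∑ j, deriv (phiProf N k α ω j) 0) = α * phiProf N k α ω j₀ 0 := by
    intro j₀
    rw [Finset.sum_congr rfl (fun j _ => hderiv0 j), hsum, hphi j₀, hgg0 j₀]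
  have hphiC : ∀ j : Fin N, (fun x => ((phiProf N k α ω j x : ℝ) : ℂ))
      = fun x => ((gg c (B j) x : ℝ) : ℂ) := by
    intro j; funext x; rw [hphi j]
  have P4 : domDelta N α (fun j x => ((phiProf N k α ω j x : ℝ) : ℂ)) := by
    refine ⟨fun j => ?_, fun j j' => ?_, fun j₀ => ?_⟩
    · show MemW2 (fun x => ((phiProf N k α ω j x : ℝ) : ℂ))
      rw [hphiC j]; exact memW2_gg c (B j)
    · show ((phiProf N k α ω j 0 : ℝ) : ℂ) = ((phiProf N k α ω j' 0 : ℝ) : ℂ)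
      exact_mod_cast congrArg Complex.ofReal (P2 j j')
    · show (∑ j, deriv (fun x => ((phiProf N k α ω j x : ℝ) : ℂ)) 0)
        = (α : ℂ) * ((phiProf N k α ω j₀ 0 : ℝ) : ℂ)
      have hdC : ∀ j : Fin N, deriv (fun x => ((phiProf N k α ω j x : ℝ) : ℂ)) 0
          = ((-(B j) * Real.exp (c - a^2/2) : ℝ) : ℂ) := by
        intro j
        rw [hphiC j, derivC]
        simp only
        rw [zero_add, hgg0 j]
      rw [Finset.sum_congr rfl (fun j _ => hdC j), ← Complex.ofReal_sum, hsum,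
        hphi j₀, hgg0 j₀]
      push_cast
      ring
  have P5 : ∀ j : Fin N, ∀ x ∈ Set.Ioi (0:ℝ),
      -(deriv (deriv (fun y => ((phiProf N k α ω j y : ℝ) : ℂ))) x)
        + (ω : ℂ) * ((phiProf N k α ω j x : ℝ) : ℂ)
        - ((phiProf N k α ω j x : ℝ) : ℂ) * ((Real.log ((phiProf N k α ω j x)^2) : ℝ) : ℂ)
        = 0 := by
    intro j x _
    rw [hphi j, deriv2C, log_sq_gg]
    simp only
    rw [hc]
    push_cast
    ring
  exact ⟨P1, P2, P3, P4, P5⟩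
end
end
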